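/- arXiv:1501.03363 — 7 statements merged into one kernel-verified Lean document; each statement's English description precedes it below -/
import Mathlib

section
/- Let p, q > 0 be real numbers and set ξ = p + q. Assume the rational-parameter setup, where now all β-multiplicities and γ-multiplicities equal 1 (M_m = 1 for all m and N_n = 1 for all n), and assume M⁺ + N⁻ ≥ ∑_{k=1}^{m⁺} m_k + ∑_{k=1}^{n⁻} n_k. Then for every x ∈ ℂ ∖ ({0} ∪ {β₁,…,β_{M⁺}} ∪ {−γ₁,…,−γ_{N⁻}}), the rational function f of formula (3.4) satisfies f(x) = (p/ξ)/x − ∑_{m=1}^{M⁺} Ĥ_m/(x−β_m) + ∑_{n=1}^{N⁻} Ĝ_n/(x+γ_n), where Ĥ_m = −(p/ξ)·[∏_{m'=1}^{M⁺}(−β_{m'})·∏_{n=1}^{N⁻}γ_n / (∏_{k=1}^{m⁺}(−η_k)^{m_k}·∏_{k=1}^{n⁻}ϑ_k^{n_k})]·[∏_{k=1}^{m⁺}(β_m−η_k)^{m_k}·∏_{k=1}^{n⁻}(β_m+ϑ_k)^{n_k} / (β_m·∏_{k≠m}(β_m−β_k)·∏_{k=1}^{N⁻}(β_m+γ_k))]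 and Ĝ_n = −(p/ξ)·[∏_{m=1}^{M⁺}β_m·∏_{n'=1}^{N⁻}γ_{n'} / (∏_{k=1}^{m⁺}η_k^{m_k}·∏_{k=1}^{n⁻}ϑ_k^{n_k})]·[∏_{k=1}^{m⁺}(γ_n+η_k)^{m_k}·∏_{k=1}^{n⁻}(ϑ_k−γ_n)^{n_k} / (γ_n·∏_{m=1}^{M⁺}(γ_n+β_m)·∏_{k≠n}(γ_k−γ_n))]. -/
open Finset Complex

section PFAux

open Polynomial

lemma prod_erase_eq_ite' {ι : Type*} [Fintype ι] [DecidableEq ι] (i : ι) (G : ι → ℂ) :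
    ∏ j ∈ Finset.univ.erase i, G j = ∏ j, (if j = i then 1 else G j) := by
  rw [← Finset.mul_prod_erase Finset.univ (fun j => if j = i then 1 else G j)
    (Finset.mem_univ i), if_pos rfl, one_mul]
  exact (Finset.prod_congr rfl fun j hj => if_neg (Finset.mem_erase.1 hj).1).symm

lemma pf_core {ι : Type*} [Fintype ι] [DecidableEq ι] (v : ι → ℂ)
    (hv : Function.Injective v) (P : Polynomial ℂ)
    (hdeg : P.degree < Fintype.card ι) (x : ℂ) (hx : ∀ i, x ≠ v i) :
    P.eval x / ∏ i, (x - v i)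
      = ∑ i, (P.eval (v i) / ∏ j ∈ Finset.univ.erase i, (v i - v j)) / (x - v i) := by
  have hP := Lagrange.eq_interpolate (s := (Finset.univ : Finset ι)) (v := v)
    hv.injOn (by simpa using hdeg)
  conv_lhs => rw [hP]
  simp only [Lagrange.interpolate_apply, Polynomial.eval_finset_sum, Polynomial.eval_mul,
    Polynomial.eval_C, Lagrange.basis, Polynomial.eval_prod, Lagrange.basisDivisor,
    Polynomial.eval_sub, Polynomial.eval_X]
  rw [Finset.sum_div]
  refine Finset.sum_congr rfl fun i _ => ?_
  have h1 : ∀ j ∈ Finset.univ.erase i, v i - v j ≠ 0 := fun j hj =>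
    sub_ne_zero.2 fun h => (Finset.mem_erase.1 hj).1 (hv h.symm)
  have h2 : x - v i ≠ 0 := sub_ne_zero.2 (hx i)
  have h3 : ∀ j ∈ Finset.univ.erase i, x - v j ≠ 0 := fun j _ => sub_ne_zero.2 (hx j)
  rw [← Finset.mul_prod_erase Finset.univ (fun j => x - v j) (Finset.mem_univ i)]
  rw [Finset.prod_mul_distrib]
  have h1' : ∏ j ∈ Finset.univ.erase i, (v i - v j) ≠ 0 := Finset.prod_ne_zero_iff.2 h1
  have h3' : ∏ j ∈ Finset.univ.erase i, (x - v j) ≠ 0 := Finset.prod_ne_zero_iff.2 h3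
  rw [Finset.prod_inv_distrib]
  field_simp

/-- Nodes of the partial-fraction decomposition: `0`, the `β`'s and the `-γ`'s. -/
def pfNode {Mp Nm : ℕ} (β : Fin Mp → ℂ) (γ : Fin Nm → ℂ) :
    Option (Fin Mp ⊕ Fin Nm) → ℂ
  | none => 0
  | some (Sum.inl k) => β k
  | some (Sum.inr k) => -γ k

@[simp] lemma pfNode_none {Mp Nm : ℕ} (β : Fin Mp → ℂ) (γ : Fin Nm → ℂ) :
    pfNode β γ none = 0 := rfl
@[simp] lemma pfNode_inl {Mp Nm : ℕ} (β : Fin Mp → ℂ) (γ : Fin Nm → ℂ) (k : Fin Mp) :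
    pfNode β γ (some (Sum.inl k)) = β k := rfl
@[simp] lemma pfNode_inr {Mp Nm : ℕ} (β : Fin Mp → ℂ) (γ : Fin Nm → ℂ) (k : Fin Nm) :
    pfNode β γ (some (Sum.inr k)) = -γ k := rfl

/-- Numerator polynomial. -/
noncomputable def pfPoly {mp nm : ℕ} (η : Fin mp → ℂ) (ϑ : Fin nm → ℂ)
    (m : Fin mp → ℕ) (n : Fin nm → ℕ) : Polynomial ℂ :=
  (∏ k, (X - C (η k)) ^ m k) * ∏ k, (X - C (-ϑ k)) ^ n k

lemma pfPoly_eval {mp nm : ℕ} (η : Fin mp → ℂ) (ϑ : Fin nm → ℂ)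
    (m : Fin mp → ℕ) (n : Fin nm → ℕ) (y : ℂ) :
    (pfPoly η ϑ m n).eval y = (∏ k, (y - η k) ^ m k) * ∏ k, (y + ϑ k) ^ n k := by
  simp [pfPoly, eval_prod, sub_neg_eq_add]

lemma pfPoly_degree {mp nm : ℕ} (η : Fin mp → ℂ) (ϑ : Fin nm → ℂ)
    (m : Fin mp → ℕ) (n : Fin nm → ℕ) :
    (pfPoly η ϑ m n).degree = ((∑ k, m k + ∑ k, n k : ℕ) : WithBot ℕ) := by
  have h1 : (∏ k, (X - C (η k)) ^ m k : ℂ[X]) ≠ 0 :=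
    (monic_prod_of_monic _ _ fun k _ => (monic_X_sub_C _).pow _).ne_zero
  have h2 : (∏ k, (X - C (-ϑ k)) ^ n k : ℂ[X]) ≠ 0 :=
    (monic_prod_of_monic _ _ fun k _ => (monic_X_sub_C _).pow _).ne_zero
  have hP : (pfPoly η ϑ m n) ≠ 0 := mul_ne_zero h1 h2
  rw [Polynomial.degree_eq_natDegree hP]
  congr 1
  rw [pfPoly, Polynomial.natDegree_mul h1 h2,
    Polynomial.natDegree_prod _ _ (fun k _ => pow_ne_zero _ (X_sub_C_ne_zero _)),
    Polynomial.natDegree_prod _ _ (fun k _ => pow_ne_zero _ (X_sub_C_ne_zero _))]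
  simp [Polynomial.natDegree_pow]

lemma neg_prod_pow {κ : Type*} [Fintype κ] (a : κ → ℂ) (e : κ → ℕ) :
    ∏ k, (-a k) ^ e k = (-1) ^ (∑ k, e k) * ∏ k, (a k) ^ e k := by
  calc ∏ k, (-a k) ^ e k = ∏ k, ((-1) ^ e k * (a k) ^ e k) := by
        refine Finset.prod_congr rfl fun k _ => ?_
        rw [neg_pow]
    _ = (-1) ^ (∑ k, e k) * ∏ k, (a k) ^ e k := by
        rw [Finset.prod_mul_distrib, Finset.prod_pow_eq_pow_sum]

lemma neg_prod' {κ : Type*} [Fintype κ] (a : κ → ℂ) :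
    ∏ k, (-a k) = (-1) ^ (Fintype.card κ) * ∏ k, a k := by
  simpa using neg_prod_pow a (fun _ => 1)

lemma coef_zero (c a d x : ℂ) (ha : a ≠ 0) (hd : d ≠ 0) :
    c * (a / d) * (d / a) / x = c / x := by
  rw [mul_assoc, div_mul_div_comm, mul_comm d a, div_self (mul_ne_zero ha hd), mul_one]

lemma coef_gamma (c u w a1 a2 d1 d2 b1 b2 g q1 q2 x' : ℂ) (hu : u ≠ 0) (hw : w ≠ 0)
    (hd1 : d1 ≠ 0) (hd2 : d2 ≠ 0) (hg : g ≠ 0) (hq1 : q1 ≠ 0) (hq2 : q2 ≠ 0) :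
    c * ((w * a1) * a2 / ((u * d1) * d2)) * (((u * b1) * b2) / (-g * ((w * q1) * q2))) / x'
      = -(c * (a1 * a2 / (d1 * d2)) * (b1 * b2 / (g * q1 * q2))) / x' := by
  congr 1
  have e1 : c * ((w * a1) * a2 / ((u * d1) * d2)) * (((u * b1) * b2) / (-g * ((w * q1) * q2)))
      = (c * ((w * a1) * a2) * ((u * b1) * b2)) / (((u * d1) * d2) * (-g * ((w * q1) * q2))) := by
    rw [mul_div_assoc', mul_div_assoc', div_mul_eq_mul_div, div_div]
  have e2 : c * (a1 * a2 / (d1 * d2)) * (b1 * b2 / (g * q1 * q2))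
      = (c * (a1 * a2) * (b1 * b2)) / ((d1 * d2) * (g * q1 * q2)) := by
    rw [mul_div_assoc', mul_div_assoc', div_mul_eq_mul_div, div_div]
  have hden1 : ((u * d1) * d2) * (-g * ((w * q1) * q2)) ≠ 0 :=
    mul_ne_zero (mul_ne_zero (mul_ne_zero hu hd1) hd2)
      (mul_ne_zero (neg_ne_zero.2 hg) (mul_ne_zero (mul_ne_zero hw hq1) hq2))
  have hden2 : (d1 * d2) * (g * q1 * q2) ≠ 0 :=
    mul_ne_zero (mul_ne_zero hd1 hd2) (mul_ne_zero (mul_ne_zero hg hq1) hq2)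
  rw [e1, e2, ← neg_div, div_eq_div_iff hden1 hden2]
  ring

end PFAux


/-- The particular case of Section 4.1 (formulas (4.1)–(4.3)): when all the roots `β` and
`γ` are simple (all multiplicities `M_m = N_n = 1`) and `M⁺ + N⁻ ≥ ∑ m_k + ∑ n_k`, the
rational function `f` of formula (3.4) admits the explicit simple-pole partial-fraction
decomposition with coefficients `Ĥ_m` and `Ĝ_n`. -/
theorem paper_sec_4_1 (p q : ℝ) (hp : 0 < p) (hq : 0 < q)
    (Mp Nm mp nm : ℕ)
    (β : Fin Mp → ℂ) (M : Fin Mp → ℕ)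
    (γ : Fin Nm → ℂ) (N : Fin Nm → ℕ)
    (η : Fin mp → ℂ) (m : Fin mp → ℕ)
    (ϑ : Fin nm → ℂ) (n : Fin nm → ℕ)
    (hβinj : Function.Injective β) (hβre : ∀ k, 0 < (β k).re) (hM : ∀ k, M k = 1)
    (hγinj : Function.Injective γ) (hγre : ∀ k, 0 < (γ k).re) (hN : ∀ k, N k = 1)
    (hηinj : Function.Injective η) (hηre : ∀ k, 0 < (η k).re) (hm : ∀ k, 1 ≤ m k)
    (hϑinj : Function.Injective ϑ) (hϑre : ∀ k, 0 < (ϑ k).re) (hn : ∀ k, 1 ≤ n k)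
    (hηβ : ∀ k j, η k ≠ β j) (hϑγ : ∀ k j, ϑ k ≠ γ j)
    (hdeg : ∑ k, m k + ∑ k, n k ≤ Mp + Nm)
    (f : ℂ → ℂ)
    (hf : ∀ x : ℂ, f x =
      ((p : ℂ) / ((p : ℂ) + (q : ℂ))) *
        ((∏ mm, (-β mm) ^ M mm) * (∏ nn, γ nn ^ N nn) *
          (∏ k, (x - η k) ^ m k) * ∏ k, (x + ϑ k) ^ n k) /
        ((∏ k, (-η k) ^ m k) * (∏ k, ϑ k ^ n k) * x *
          (∏ mm, (x - β mm) ^ M mm) * ∏ nn, (x + γ nn) ^ N nn)) :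
    ∀ x : ℂ, x ≠ 0 → (∀ mm, x ≠ β mm) → (∀ nn, x ≠ -γ nn) →
      f x = ((p : ℂ) / ((p : ℂ) + (q : ℂ))) / x
        - (∑ mm, (-(((p : ℂ) / ((p : ℂ) + (q : ℂ))) *
            ((∏ mm', -β mm') * (∏ nn, γ nn) /
              ((∏ k, (-η k) ^ m k) * ∏ k, ϑ k ^ n k)) *
            ((∏ k, (β mm - η k) ^ m k) * (∏ k, (β mm + ϑ k) ^ n k) /
              (β mm * (∏ k ∈ Finset.univ.erase mm, (β mm - β k)) *
                ∏ k, (β mm + γ k))))) / (x - β mm))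
        + ∑ nn, (-(((p : ℂ) / ((p : ℂ) + (q : ℂ))) *
            ((∏ mm, β mm) * (∏ nn', γ nn') /
              ((∏ k, η k ^ m k) * ∏ k, ϑ k ^ n k)) *
            ((∏ k, (γ nn + η k) ^ m k) * (∏ k, (ϑ k - γ nn) ^ n k) /
              (γ nn * (∏ mm, (γ nn + β mm)) *
                ∏ k ∈ Finset.univ.erase nn, (γ k - γ nn))))) / (x + γ nn) := by
  intro x hx0 hxβ hxγ
  -- nonzeroness helpers
  have hre0 : ∀ z : ℂ, 0 < z.re → z ≠ 0 := fun z hz h => by rw [h] at hz; simp at hz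
  have hadd0 : ∀ z w : ℂ, 0 < z.re → 0 < w.re → z + w ≠ 0 := fun z w hz hw => by
    refine hre0 _ ?_
    rw [Complex.add_re]; linarith
  have hβ0 : ∀ k, β k ≠ 0 := fun k => hre0 _ (hβre k)
  have hγ0 : ∀ k, γ k ≠ 0 := fun k => hre0 _ (hγre k)
  have hη0 : ∀ k, η k ≠ 0 := fun k => hre0 _ (hηre k)
  have hϑ0 : ∀ k, ϑ k ≠ 0 := fun k => hre0 _ (hϑre k)
  have hβγ : ∀ k j, β k ≠ -γ j := by
    intro k j h
    have h1 := hβre k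
    rw [h, Complex.neg_re] at h1
    linarith [hγre j]
  have hpq : ((p : ℂ) + (q : ℂ)) ≠ 0 := by
    rw [← Complex.ofReal_add]
    exact_mod_cast (by positivity : (p + q : ℝ) ≠ 0)
  -- the nodes
  set v : Option (Fin Mp ⊕ Fin Nm) → ℂ := pfNode β γ with hv
  have hvinj : Function.Injective v := by
    rintro (_ | (a | a)) (_ | (b | b)) h <;>
      simp only [hv, pfNode_none, pfNode_inl, pfNode_inr] at h
    · rfl
    · exact absurd h.symm (hβ0 b)
    · exact absurd h.symm (neg_ne_zero.2 (hγ0 b))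
    · exact absurd h (hβ0 a)
    · exact congrArg _ (congrArg _ (hβinj h))
    · exact absurd h (hβγ a b)
    · exact absurd h (neg_ne_zero.2 (hγ0 a))
    · exact absurd h.symm (hβγ b a)
    · exact congrArg _ (congrArg _ (hγinj (neg_injective h)))
  have hxv : ∀ i, x ≠ v i := by
    rintro (_ | (k | k)) <;> simp only [hv, pfNode_none, pfNode_inl, pfNode_inr]
    · exact hx0
    · exact hxβ k
    · exact hxγ k
  -- the polynomial
  set P : Polynomial ℂ := pfPoly η ϑ m n with hP
  have hdegP : P.degree < Fintype.card (Option (Fin Mp ⊕ Fin Nm)) := by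
    have hcard : Fintype.card (Option (Fin Mp ⊕ Fin Nm)) = Mp + Nm + 1 := by simp
    rw [hcard, hP, pfPoly_degree]
    exact_mod_cast Nat.lt_succ_of_le hdeg
  have key := pf_core v hvinj P hdegP x hxv
  -- the product over all nodes
  have hprodv : ∏ i, (x - v i) = x * (∏ mm, (x - β mm)) * ∏ nn, (x + γ nn) := by
    rw [Fintype.prod_option, Fintype.prod_sum_type]
    simp only [hv, pfNode_none, pfNode_inl, pfNode_inr, sub_zero, sub_neg_eq_add]
    ring
  -- erase products
  have er0 : ∏ j ∈ Finset.univ.erase (none : Option (Fin Mp ⊕ Fin Nm)), (v none - v j)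
      = (∏ k, (-β k)) * ∏ k, γ k := by
    rw [prod_erase_eq_ite', Fintype.prod_option, Fintype.prod_sum_type]
    simp [hv, zero_sub, sub_neg_eq_add]
  have erβ : ∀ mm, ∏ j ∈ Finset.univ.erase (some (Sum.inl mm) : Option (Fin Mp ⊕ Fin Nm)),
        (v (some (Sum.inl mm)) - v j)
      = β mm * ((∏ k ∈ Finset.univ.erase mm, (β mm - β k)) * ∏ k, (β mm + γ k)) := by
    intro mm
    rw [prod_erase_eq_ite', Fintype.prod_option, Fintype.prod_sum_type,
      prod_erase_eq_ite' mm (fun k => β mm - β k)]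
    simp only [hv, pfNode_none, pfNode_inl, pfNode_inr, sub_zero, sub_neg_eq_add,
      Option.some.injEq, Sum.inl.injEq, reduceCtorEq, if_false]
  have erγ : ∀ nn, ∏ j ∈ Finset.univ.erase (some (Sum.inr nn) : Option (Fin Mp ⊕ Fin Nm)),
        (v (some (Sum.inr nn)) - v j)
      = (-γ nn) * ((∏ k, (-γ nn - β k)) * ∏ k ∈ Finset.univ.erase nn, (γ k - γ nn)) := by
    intro nn
    rw [prod_erase_eq_ite', Fintype.prod_option, Fintype.prod_sum_type,
      prod_erase_eq_ite' nn (fun k => γ k - γ nn)]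
    simp only [hv, pfNode_none, pfNode_inl, pfNode_inr, sub_zero, sub_neg_eq_add,
      Option.some.injEq, Sum.inr.injEq, reduceCtorEq, if_false, neg_add_eq_sub]
  -- the constant
  set K : ℂ := ((p : ℂ) / ((p : ℂ) + (q : ℂ))) *
      ((∏ mm, -β mm) * (∏ nn, γ nn) /
        ((∏ k, (-η k) ^ m k) * ∏ k, ϑ k ^ n k)) with hK
  -- decomposition of f x
  have hfx : f x =
      (K * (P.eval (v none) /
          ∏ j ∈ Finset.univ.erase (none : Option (Fin Mp ⊕ Fin Nm)), (v none - v j)))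
        / (x - v none)
      + ((∑ mm, (K * (P.eval (v (some (Sum.inl mm))) /
          ∏ j ∈ Finset.univ.erase (some (Sum.inl mm)), (v (some (Sum.inl mm)) - v j)))
        / (x - v (some (Sum.inl mm))))
      + ∑ nn, (K * (P.eval (v (some (Sum.inr nn))) /
          ∏ j ∈ Finset.univ.erase (some (Sum.inr nn)), (v (some (Sum.inr nn)) - v j)))
        / (x - v (some (Sum.inr nn)))) := by
    calc f x = K * (P.eval x / ∏ i, (x - v i)) := by
          rw [hf x]
          simp only [hM, hN, pow_one]
          rw [hP, pfPoly_eval, hprodv, hK]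
          ring
      _ = ∑ i, (K * (P.eval (v i) / ∏ j ∈ Finset.univ.erase i, (v i - v j))) / (x - v i) := by
          rw [key, Finset.mul_sum]
          exact Finset.sum_congr rfl fun i _ => (mul_div_assoc _ _ _).symm
      _ = _ := by rw [Fintype.sum_option, Fintype.sum_sum_type]
  -- nonzero products
  have h1 : (∏ k, (-β k)) ≠ 0 :=
    Finset.prod_ne_zero_iff.2 fun k _ => neg_ne_zero.2 (hβ0 k)
  have h2 : (∏ k, γ k) ≠ 0 := Finset.prod_ne_zero_iff.2 fun k _ => hγ0 k
  have h3 : (∏ k, (-η k) ^ m k) ≠ 0 :=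
    Finset.prod_ne_zero_iff.2 fun k _ => pow_ne_zero _ (neg_ne_zero.2 (hη0 k))
  have h4 : (∏ k, ϑ k ^ n k) ≠ 0 :=
    Finset.prod_ne_zero_iff.2 fun k _ => pow_ne_zero _ (hϑ0 k)
  have h5 : (∏ k, η k ^ m k) ≠ 0 :=
    Finset.prod_ne_zero_iff.2 fun k _ => pow_ne_zero _ (hη0 k)
  -- term at 0
  have E0 : (K * (P.eval (v none) /
          ∏ j ∈ Finset.univ.erase (none : Option (Fin Mp ⊕ Fin Nm)), (v none - v j)))
        / (x - v none) = ((p : ℂ) / ((p : ℂ) + (q : ℂ))) / x := by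
    rw [er0, hP, pfPoly_eval]
    simp only [hv, pfNode_none, sub_zero, zero_sub, zero_add]
    rw [hK]
    exact coef_zero _ _ _ _ (mul_ne_zero h1 h2) (mul_ne_zero h3 h4)
  -- terms at β
  have E1 : (∑ mm, (K * (P.eval (v (some (Sum.inl mm))) /
          ∏ j ∈ Finset.univ.erase (some (Sum.inl mm)), (v (some (Sum.inl mm)) - v j)))
        / (x - v (some (Sum.inl mm))))
      = -(∑ mm, (-(((p : ℂ) / ((p : ℂ) + (q : ℂ))) *
            ((∏ mm', -β mm') * (∏ nn, γ nn) /
              ((∏ k, (-η k) ^ m k) * ∏ k, ϑ k ^ n k)) *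
            ((∏ k, (β mm - η k) ^ m k) * (∏ k, (β mm + ϑ k) ^ n k) /
              (β mm * (∏ k ∈ Finset.univ.erase mm, (β mm - β k)) *
                ∏ k, (β mm + γ k))))) / (x - β mm)) := by
    rw [← Finset.sum_neg_distrib]
    refine Finset.sum_congr rfl fun mm _ => ?_
    rw [← neg_div, neg_neg, erβ mm, hP, pfPoly_eval]
    simp only [hv, pfNode_inl]
    rw [hK, ← mul_assoc (β mm)]
  -- terms at -γ
  have E2 : (∑ nn, (K * (P.eval (v (some (Sum.inr nn))) /
          ∏ j ∈ Finset.univ.erase (some (Sum.inr nn)), (v (some (Sum.inr nn)) - v j)))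
        / (x - v (some (Sum.inr nn))))
      = ∑ nn, (-(((p : ℂ) / ((p : ℂ) + (q : ℂ))) *
            ((∏ mm, β mm) * (∏ nn', γ nn') /
              ((∏ k, η k ^ m k) * ∏ k, ϑ k ^ n k)) *
            ((∏ k, (γ nn + η k) ^ m k) * (∏ k, (ϑ k - γ nn) ^ n k) /
              (γ nn * (∏ mm, (γ nn + β mm)) *
                ∏ k ∈ Finset.univ.erase nn, (γ k - γ nn))))) / (x + γ nn) := by
    refine Finset.sum_congr rfl fun nn _ => ?_
    rw [erγ nn, hP, pfPoly_eval]
    simp only [hv, pfNode_inr, sub_neg_eq_add, neg_add_eq_sub]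
    rw [hK]
    have s1 : ∏ k, (-γ nn - η k) ^ m k
        = (-1) ^ (∑ k, m k) * ∏ k, (γ nn + η k) ^ m k := by
      rw [← neg_prod_pow]
      exact Finset.prod_congr rfl fun k _ => by rw [neg_add, ← sub_eq_add_neg]
    have s2 : ∏ k, (-η k) ^ m k = (-1) ^ (∑ k, m k) * ∏ k, η k ^ m k := neg_prod_pow η m
    have s3 : ∏ k, (-β k) = (-1) ^ Mp * ∏ k, β k := by
      simpa using neg_prod' β
    have s4 : ∏ k, (-γ nn - β k) = (-1) ^ Mp * ∏ k, (γ nn + β k) := by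
      have := neg_prod' (fun k => γ nn + β k)
      simp only [Fintype.card_fin] at this
      rw [← this]
      exact Finset.prod_congr rfl fun k _ => by rw [neg_add, ← sub_eq_add_neg]
    rw [s1, s2, s3, s4]
    have hm1 : ((-1 : ℂ)) ^ (∑ k, m k) ≠ 0 := pow_ne_zero _ (neg_ne_zero.2 one_ne_zero)
    have hM1 : ((-1 : ℂ)) ^ Mp ≠ 0 := pow_ne_zero _ (neg_ne_zero.2 one_ne_zero)
    have hgb : (∏ k, (γ nn + β k)) ≠ 0 :=
      Finset.prod_ne_zero_iff.2 fun k _ => hadd0 _ _ (hγre nn) (hβre k)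
    have hgg : (∏ k ∈ Finset.univ.erase nn, (γ k - γ nn)) ≠ 0 :=
      Finset.prod_ne_zero_iff.2 fun k hk =>
        sub_ne_zero.2 fun h => (Finset.mem_erase.1 hk).1 (hγinj h)
    exact coef_gamma _ _ _ _ _ _ _ _ _ _ _ _ _ hm1 hM1 h5 h4 (hγ0 nn) hgb hgg
  rw [hfx, E0, E1, E2]
  abel
end

section
/- Assume the rational-parameter setup and additionally that ∑_{m=1}^{M⁺} M_m = ∑_{k=1}^{m⁺} m_k and ∑_{n=1}^{N⁻} N_n = ∑_{k=1}^{n⁻} n_k. Let H⁰_{mi} ∈ ℂ (1 ≤ m ≤ M⁺, 1 ≤ i ≤ M_m) and G⁰_{ni} ∈ ℂ (1 ≤ n ≤ N⁻, 1 ≤ i ≤ N_n) be such that for every x ∈ ℂ ∖ ({0} ∪ {β₁,…,β_{M⁺}} ∪ {−γ₁,…,−γ_{N⁻}}) one has ∑_{m=1}^{M⁺} ∑_{i=1}^{M_m} H⁰_{mi}·(−1)^i/(x−β_m)^i + ∑_{n=1}^{N⁻} ∑_{i=1}^{N_n} G⁰_{ni}/(x+γ_n)^i + 1/x = f⁰(x),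 where f⁰(x) = [∏_{m=1}^{M⁺}(−β_m)^{M_m}·∏_{n=1}^{N⁻}γ_n^{N_n}·∏_{k=1}^{m⁺}(x−η_k)^{m_k}·∏_{k=1}^{n⁻}(x+ϑ_k)^{n_k}] / [∏_{k=1}^{m⁺}(−η_k)^{m_k}·∏_{k=1}^{n⁻}ϑ_k^{n_k}·x·∏_{m=1}^{M⁺}(x−β_m)^{M_m}·∏_{n=1}^{N⁻}(x+γ_n)^{N_n}]. Then ∑_{m=1}^{M⁺} H⁰_{m1} − 1 − ∑_{n=1}^{N⁻} G⁰_{n1} = −∏_{m=1}^{M⁺}β_m^{M_m}·∏_{n=1}^{N⁻}γ_n^{N_n} / (∏_{k=1}^{m⁺}η_k^{m_k}·∏_{k=1}^{n⁻}ϑ_k^{n_k}). -/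
open Finset Complex Filter Topology

namespace PE339

lemma norm_add_atTop (a : ℂ) : Tendsto (fun t : ℝ => ‖(t:ℂ) + a‖) atTop atTop := by
  apply tendsto_atTop_mono (f := fun t : ℝ => t - ‖a‖)
  · intro t
    have h1 : ‖(t:ℂ)‖ ≤ ‖(t:ℂ) + a‖ + ‖a‖ := by
      have h1' := norm_add_le ((t:ℂ) + a) (-a)
      simpa using h1'
    have h2 : t ≤ ‖(t:ℂ)‖ := by
      rw [Complex.norm_real, Real.norm_eq_abs]; exact le_abs_self t
    linarith
  · exact tendsto_atTop_add_const_right _ _ tendsto_id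

lemma ne_zero_eventually (a : ℂ) : ∀ᶠ t : ℝ in atTop, (t:ℂ) + a ≠ 0 := by
  filter_upwards [(norm_add_atTop a).eventually_gt_atTop 0] with t ht
  exact norm_pos_iff.mp ht

lemma inv_tendsto (a : ℂ) : Tendsto (fun t : ℝ => ((t:ℂ) + a)⁻¹) atTop (𝓝 0) := by
  rw [tendsto_zero_iff_norm_tendsto_zero]
  exact (norm_add_atTop a).inv_tendsto_atTop.congr (fun t => by simp [norm_inv])

lemma base (a : ℂ) : Tendsto (fun t : ℝ => (t:ℂ) * ((t:ℂ) + a)⁻¹) atTop (𝓝 1) := by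
  have h : Tendsto (fun t : ℝ => 1 - a * ((t:ℂ) + a)⁻¹) atTop (𝓝 1) := by
    have h' := (tendsto_const_nhds : Tendsto (fun _ : ℝ => (1:ℂ)) atTop (𝓝 1)).sub
      ((inv_tendsto a).const_mul a)
    simpa using h'
  refine h.congr' ?_
  filter_upwards [ne_zero_eventually a] with t ht
  have hc : ((t:ℂ) + a) * ((t:ℂ) + a)⁻¹ = 1 := mul_inv_cancel₀ ht
  linear_combination -hc

lemma aux (a : ℂ) (i : ℕ) (hi : 1 ≤ i) :
    Tendsto (fun t : ℝ => (t:ℂ) * (((t:ℂ) + a) ^ i)⁻¹) atTop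
      (𝓝 (if i = 1 then 1 else 0)) := by
  obtain ⟨j, rfl⟩ : ∃ j, i = j + 1 := ⟨i - 1, (Nat.succ_pred_eq_of_pos hi).symm⟩
  have hfun : ∀ t : ℝ, (t:ℂ) * (((t:ℂ) + a) ^ (j + 1))⁻¹
      = ((t:ℂ) * ((t:ℂ) + a)⁻¹) * (((t:ℂ) + a)⁻¹) ^ j := by
    intro t; rw [← inv_pow, pow_succ]; ring
  simp only [hfun]
  cases j with
  | zero => simpa using (base a).mul ((inv_tendsto a).pow 0)
  | succ k => simpa using (base a).mul ((inv_tendsto a).pow (k + 1))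

lemma icc_tendsto (a : ℂ) (K : ℕ) (hK : 1 ≤ K) (c : ℕ → ℂ) :
    Tendsto (fun t : ℝ => ∑ i ∈ Finset.Icc 1 K, c i * ((t:ℂ) * (((t:ℂ) + a) ^ i)⁻¹))
      atTop (𝓝 (c 1)) := by
  have h := tendsto_finset_sum (Finset.Icc 1 K)
    (fun i hi => ((aux a i (Finset.mem_Icc.mp hi).1).const_mul (c i)))
  have hsum : (∑ i ∈ Finset.Icc 1 K, c i * (if i = 1 then (1:ℂ) else 0)) = c 1 := by
    simp only [mul_ite, mul_one, mul_zero]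
    rw [Finset.sum_ite_eq' (Finset.Icc 1 K) 1 c]
    simp [hK]
  rw [← hsum]
  exact h

lemma factor (a : ℂ) (e : ℕ) :
    Tendsto (fun t : ℝ => (((t:ℂ) + a) / t) ^ e) atTop (𝓝 1) := by
  have h1 : Tendsto (fun t : ℝ => ((t:ℂ) + a) / t) atTop (𝓝 1) := by
    have h0 : Tendsto (fun t : ℝ => ((t:ℂ))⁻¹) atTop (𝓝 0) := by
      simpa using inv_tendsto 0
    have h := (tendsto_const_nhds : Tendsto (fun _ : ℝ => (1:ℂ)) atTop (𝓝 1)).add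
      (h0.const_mul a)
    simp only [mul_zero, add_zero] at h
    refine h.congr' ?_
    filter_upwards [eventually_ne_atTop (0:ℝ)] with t ht
    have ht' : (t:ℂ) ≠ 0 := Complex.ofReal_ne_zero.mpr ht
    field_simp
  simpa using h1.pow e

end PE339

/-- The algebraic content of the jump-size identity (3.39): if the coefficients `H⁰`, `G⁰`
satisfy the partial-fraction identity (3.32) for the rational function `f⁰` of (3.33), and
the degrees satisfy `∑ M_m = ∑ m_k` and `∑ N_n = ∑ n_k`, then
`∑ H⁰_{m1} − 1 − ∑ G⁰_{n1} = −∏ β^M ∏ γ^N / (∏ η^m ∏ ϑ^n)`. -/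
theorem paper_eq_3_39 (Mp Nm mp nm : ℕ)
    (β : Fin Mp → ℂ) (M : Fin Mp → ℕ)
    (γ : Fin Nm → ℂ) (N : Fin Nm → ℕ)
    (η : Fin mp → ℂ) (m : Fin mp → ℕ)
    (ϑ : Fin nm → ℂ) (n : Fin nm → ℕ)
    (hβinj : Function.Injective β) (hβre : ∀ k, 0 < (β k).re) (hM : ∀ k, 1 ≤ M k)
    (hγinj : Function.Injective γ) (hγre : ∀ k, 0 < (γ k).re) (hN : ∀ k, 1 ≤ N k)
    (hηinj : Function.Injective η) (hηre : ∀ k, 0 < (η k).re) (hm : ∀ k, 1 ≤ m k)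
    (hϑinj : Function.Injective ϑ) (hϑre : ∀ k, 0 < (ϑ k).re) (hn : ∀ k, 1 ≤ n k)
    (hηβ : ∀ k j, η k ≠ β j) (hϑγ : ∀ k j, ϑ k ≠ γ j)
    (hdegM : ∑ k, M k = ∑ k, m k) (hdegN : ∑ k, N k = ∑ k, n k)
    (H0 : Fin Mp → ℕ → ℂ) (G0 : Fin Nm → ℕ → ℂ)
    (hpf : ∀ x : ℂ, x ≠ 0 → (∀ mm, x ≠ β mm) → (∀ nn, x ≠ -γ nn) →
      ∑ mm, ∑ i ∈ Finset.Icc 1 (M mm), H0 mm i * (-1) ^ i / (x - β mm) ^ i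
        + ∑ nn, ∑ i ∈ Finset.Icc 1 (N nn), G0 nn i / (x + γ nn) ^ i
        + 1 / x
      = ((∏ mm, (-β mm) ^ M mm) * (∏ nn, γ nn ^ N nn) *
          (∏ k, (x - η k) ^ m k) * ∏ k, (x + ϑ k) ^ n k) /
        ((∏ k, (-η k) ^ m k) * (∏ k, ϑ k ^ n k) * x *
          (∏ mm, (x - β mm) ^ M mm) * ∏ nn, (x + γ nn) ^ N nn)) :
    ∑ mm, H0 mm 1 - 1 - ∑ nn, G0 nn 1
      = -((∏ mm, β mm ^ M mm) * ∏ nn, γ nn ^ N nn) /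
          ((∏ k, η k ^ m k) * ∏ k, ϑ k ^ n k) := by
  -- Eventual nondegeneracy along the real axis
  have ht0 : ∀ᶠ t : ℝ in atTop, (t:ℂ) ≠ 0 := by
    filter_upwards [eventually_ne_atTop (0:ℝ)] with t ht
    exact Complex.ofReal_ne_zero.mpr ht
  have htβ : ∀ᶠ t : ℝ in atTop, ∀ mm, (t:ℂ) ≠ β mm := by
    rw [Filter.eventually_all]
    intro mm
    filter_upwards [PE339.ne_zero_eventually (-(β mm))] with t ht h
    exact ht (by rw [h]; ring)
  have htγ : ∀ᶠ t : ℝ in atTop, ∀ nn, (t:ℂ) ≠ -γ nn := by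
    rw [Filter.eventually_all]
    intro nn
    filter_upwards [PE339.ne_zero_eventually (γ nn)] with t ht h
    exact ht (by rw [h]; ring)
  -- The function whose limit we compute twice
  set f : ℝ → ℂ := fun t =>
    (t:ℂ) * (((∏ mm, (-β mm) ^ M mm) * (∏ nn, γ nn ^ N nn) *
          (∏ k, ((t:ℂ) - η k) ^ m k) * ∏ k, ((t:ℂ) + ϑ k) ^ n k) /
        ((∏ k, (-η k) ^ m k) * (∏ k, ϑ k ^ n k) * (t:ℂ) *
          (∏ mm, ((t:ℂ) - β mm) ^ M mm) * ∏ nn, ((t:ℂ) + γ nn) ^ N nn)) with hf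
  -- Limit 1: via the partial-fraction side
  have hL : Tendsto (fun t : ℝ =>
      (∑ mm, ∑ i ∈ Finset.Icc 1 (M mm),
          (H0 mm i * (-1) ^ i) * ((t:ℂ) * (((t:ℂ) + -(β mm)) ^ i)⁻¹))
        + (∑ nn, ∑ i ∈ Finset.Icc 1 (N nn),
          (G0 nn i) * ((t:ℂ) * (((t:ℂ) + γ nn) ^ i)⁻¹)) + 1)
      atTop (𝓝 ((∑ mm, H0 mm 1 * (-1 : ℂ) ^ (1:ℕ)) + (∑ nn, G0 nn 1) + 1)) := by
    refine Tendsto.add (Tendsto.add ?_ ?_) tendsto_const_nhds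
    · exact tendsto_finset_sum _ fun mm _ =>
        PE339.icc_tendsto (-(β mm)) (M mm) (hM mm) (fun i => H0 mm i * (-1) ^ i)
    · exact tendsto_finset_sum _ fun nn _ =>
        PE339.icc_tendsto (γ nn) (N nn) (hN nn) (fun i => G0 nn i)
  have halg : ∀ t : ℝ, (t:ℂ) ≠ 0 →
      (t:ℂ) * (∑ mm, ∑ i ∈ Finset.Icc 1 (M mm), H0 mm i * (-1) ^ i / ((t:ℂ) - β mm) ^ i
        + ∑ nn, ∑ i ∈ Finset.Icc 1 (N nn), G0 nn i / ((t:ℂ) + γ nn) ^ i + 1 / (t:ℂ))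
      = (∑ mm, ∑ i ∈ Finset.Icc 1 (M mm),
          (H0 mm i * (-1) ^ i) * ((t:ℂ) * (((t:ℂ) + -(β mm)) ^ i)⁻¹))
        + (∑ nn, ∑ i ∈ Finset.Icc 1 (N nn),
          (G0 nn i) * ((t:ℂ) * (((t:ℂ) + γ nn) ^ i)⁻¹)) + 1 := by
    intro t ht
    rw [mul_add, mul_add]
    congr 1
    · congr 1
      · rw [Finset.mul_sum]
        refine Finset.sum_congr rfl fun mm _ => ?_
        rw [Finset.mul_sum]
        exact Finset.sum_congr rfl fun i _ => by ring
      · rw [Finset.mul_sum]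
        refine Finset.sum_congr rfl fun nn _ => ?_
        rw [Finset.mul_sum]
        exact Finset.sum_congr rfl fun i _ => by ring
    · rw [mul_one_div, div_self ht]
  have h1 : Tendsto f atTop
      (𝓝 ((∑ mm, H0 mm 1 * (-1 : ℂ) ^ (1:ℕ)) + (∑ nn, G0 nn 1) + 1)) := by
    refine hL.congr' ?_
    filter_upwards [ht0, htβ, htγ] with t ht hb hg
    rw [hf]
    rw [← halg t ht, hpf (t:ℂ) ht hb hg]
  -- Limit 2: via the rational-function side
  set D : ℕ := (∑ k, m k) + (∑ k, n k) with hD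
  have hDQ : (∑ k, M k) + (∑ k, N k) = D := by rw [hD, hdegM, hdegN]
  have hP : Tendsto (fun t : ℝ =>
      ((∏ k, ((t:ℂ) - η k) ^ m k) * ∏ k, ((t:ℂ) + ϑ k) ^ n k) / (t:ℂ) ^ D)
      atTop (𝓝 1) := by
    have key : ∀ t : ℝ,
        (∏ k, (((t:ℂ) + -(η k)) / t) ^ m k) * ∏ k, (((t:ℂ) + ϑ k) / t) ^ n k
        = ((∏ k, ((t:ℂ) - η k) ^ m k) * ∏ k, ((t:ℂ) + ϑ k) ^ n k) / (t:ℂ) ^ D := by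
      intro t
      simp only [div_pow, Finset.prod_div_distrib, Finset.prod_pow_eq_pow_sum,
        sub_eq_add_neg]
      rw [div_mul_div_comm, ← pow_add, ← hD]
    have h := (tendsto_finset_prod (univ : Finset (Fin mp))
        (fun k _ => PE339.factor (-(η k)) (m k))).mul
      (tendsto_finset_prod (univ : Finset (Fin nm)) (fun k _ => PE339.factor (ϑ k) (n k)))
    simp only [Finset.prod_const_one, mul_one] at h
    exact h.congr key
  have hQ : Tendsto (fun t : ℝ =>
      ((∏ mm, ((t:ℂ) - β mm) ^ M mm) * ∏ nn, ((t:ℂ) + γ nn) ^ N nn) / (t:ℂ) ^ D)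
      atTop (𝓝 1) := by
    have key : ∀ t : ℝ,
        (∏ mm, (((t:ℂ) + -(β mm)) / t) ^ M mm) * ∏ nn, (((t:ℂ) + γ nn) / t) ^ N nn
        = ((∏ mm, ((t:ℂ) - β mm) ^ M mm) * ∏ nn, ((t:ℂ) + γ nn) ^ N nn) / (t:ℂ) ^ D := by
      intro t
      simp only [div_pow, Finset.prod_div_distrib, Finset.prod_pow_eq_pow_sum,
        sub_eq_add_neg]
      rw [div_mul_div_comm, ← pow_add, hDQ]
    have h := (tendsto_finset_prod (univ : Finset (Fin Mp))
        (fun k _ => PE339.factor (-(β k)) (M k))).mul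
      (tendsto_finset_prod (univ : Finset (Fin Nm)) (fun k _ => PE339.factor (γ k) (N k)))
    simp only [Finset.prod_const_one, mul_one] at h
    exact h.congr key
  have h2 : Tendsto f atTop
      (𝓝 (((∏ mm, (-β mm) ^ M mm) * ∏ nn, γ nn ^ N nn) /
        ((∏ k, (-η k) ^ m k) * ∏ k, ϑ k ^ n k))) := by
    have hdiv := hP.div hQ one_ne_zero
    have h := hdiv.const_mul (((∏ mm, (-β mm) ^ M mm) * ∏ nn, γ nn ^ N nn) /
        ((∏ k, (-η k) ^ m k) * ∏ k, ϑ k ^ n k))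
    simp only [div_one, mul_one] at h
    refine h.congr' ?_
    filter_upwards [ht0] with t ht
    rw [hf]
    simp only [Pi.div_apply]
    rw [div_div_div_cancel_right₀ (pow_ne_zero D ht), div_mul_div_comm]
    rw [show ((∏ k, (-η k) ^ m k) * (∏ k, ϑ k ^ n k) * (t:ℂ) *
          (∏ mm, ((t:ℂ) - β mm) ^ M mm) * ∏ nn, ((t:ℂ) + γ nn) ^ N nn)
        = (t:ℂ) * (((∏ k, (-η k) ^ m k) * ∏ k, ϑ k ^ n k) *
          ((∏ mm, ((t:ℂ) - β mm) ^ M mm) * ∏ nn, ((t:ℂ) + γ nn) ^ N nn)) from by ring,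
      ← mul_div_assoc, mul_div_mul_left _ _ ht]
    congr 1
    ring
  -- Uniqueness of limits
  have key := tendsto_nhds_unique h1 h2
  -- Sign bookkeeping
  have hsignβ : (∏ mm, (-β mm) ^ M mm) = (-1:ℂ) ^ (∑ k, M k) * ∏ mm, β mm ^ M mm := by
    rw [← Finset.prod_pow_eq_pow_sum, ← Finset.prod_mul_distrib]
    exact Finset.prod_congr rfl fun mm _ => neg_pow _ _
  have hsignη : (∏ k, (-η k) ^ m k) = (-1:ℂ) ^ (∑ k, M k) * ∏ k, η k ^ m k := by
    rw [hdegM, ← Finset.prod_pow_eq_pow_sum, ← Finset.prod_mul_distrib]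
    exact Finset.prod_congr rfl fun k _ => neg_pow _ _
  rw [hsignβ, hsignη, mul_assoc, mul_assoc,
    mul_div_mul_left _ _ (pow_ne_zero _ (by norm_num : (-1:ℂ) ≠ 0))] at key
  simp only [pow_one, mul_neg_one, Finset.sum_neg_distrib] at key
  linear_combination -key
end

section
/- Let β₁,…,β_K be pairwise distinct complex numbers with positive real parts, with multiplicities M₁,…,M_K ≥ 1, and let C₀ ∈ ℂ and C_{kj} ∈ ℂ (1 ≤ k ≤ K, 1 ≤ j ≤ M_k). Define ψ⁺(s) = C₀ + ∑_{k=1}^{K} ∑_{j=1}^{M_k} C_{kj}/(s+β_k)^j for s ∈ ℂ with Re(s) ≥ 0. Let θ, s ∈ ℂ with Re(θ) > 0, Re(s) ≥ 0, s ≠ θ, and ψ⁺(s) ≠ 0. Then the function x ↦ e^{−θx}·(1/ψ⁺(s))·∑_{k=1}^{K} ∑_{j=1}^{M_k} C_{kj}·((−1)^{j−1}/(j−1)!)·iteratedDeriv (j−1) (b ↦ e^{−bx}/(s+b)) (β_k) is integrable on (0,∞) and ∫_0^∞ e^{−θx}·(1/ψ⁺(s))·∑_{k=1}^{K} ∑_{j=1}^{M_k}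 C_{kj}·((−1)^{j−1}/(j−1)!)·iteratedDeriv (j−1) (b ↦ e^{−bx}/(s+b)) (β_k) dx = (1/(s−θ))·(ψ⁺(θ)/ψ⁺(s) − 1). -/
open MeasureTheory Complex Finset Filter Set

lemma aux_integrable (a : ℂ) (ha : 0 < a.re) (m : ℕ) :
    IntegrableOn (fun x : ℝ => (x : ℂ) ^ m * Complex.exp (-a * x)) (Set.Ioi 0) := by
  have hg : IntegrableOn (fun x : ℝ => x ^ (m : ℝ) * Real.exp (-a.re * x ^ (1:ℝ)))
      (Set.Ioi 0) :=
    integrableOn_rpow_mul_exp_neg_mul_rpow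
      (lt_of_lt_of_le (by norm_num) (Nat.cast_nonneg m)) zero_lt_one ha
  refine Integrable.mono' hg ?_ ?_
  · exact (Continuous.aestronglyMeasurable (by continuity)).restrict
  · filter_upwards [ae_restrict_mem measurableSet_Ioi] with x hx
    have hx0 : (0:ℝ) < x := hx
    rw [norm_mul, norm_pow, Complex.norm_exp]
    have h1 : ((-a * x).re) = -a.re * x := by simp [Complex.mul_re]
    rw [h1, Real.rpow_natCast, Real.rpow_one]
    simp [Complex.norm_real, abs_of_pos hx0, le_refl]

lemma aux_tendsto {c : ℝ} (hc : 0 < c) (i : ℕ) :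
    Tendsto (fun x : ℝ => x ^ i * Real.exp (-c * x)) atTop (nhds 0) := by
  have base := Real.tendsto_pow_mul_exp_neg_atTop_nhds_zero i
  have hcm : Tendsto (fun x : ℝ => c * x) atTop atTop :=
    Filter.Tendsto.const_mul_atTop hc tendsto_id
  have h2 := base.comp hcm
  have h3 := h2.const_mul ((c ^ i)⁻¹)
  rw [mul_zero] at h3
  refine h3.congr fun x => ?_
  have : (0:ℝ) < c ^ i := pow_pos hc i
  simp only [Function.comp, mul_pow]
  field_simp

lemma aux_integral (a : ℂ) (ha : 0 < a.re) (m : ℕ) :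
    ∫ x : ℝ in Set.Ioi 0, (x : ℂ) ^ m * Complex.exp (-a * x)
      = (m.factorial : ℂ) / a ^ (m + 1) := by
  have ha0 : a ≠ 0 := fun h => by simp [h] at ha
  set c : ℕ → ℂ := fun i => (m.factorial : ℂ) / (i.factorial : ℂ) / a ^ (m + 1 - i) with hc
  set S : ℂ → ℂ := fun z => ∑ i ∈ Finset.range (m + 1), c i * z ^ i with hS
  set F : ℝ → ℂ := fun x => -(Complex.exp (-a * x) * S x) with hF
  have key : ∀ z : ℂ, a * S z - (∑ i ∈ Finset.range (m + 1), c i * (i * z ^ (i - 1))) = z ^ m := by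
    intro z
    set f : ℕ → ℂ := fun i => (m.factorial : ℂ) / (i.factorial : ℂ) * z ^ i / a ^ (m - i) with hf
    have hA : a * S z = ∑ i ∈ Finset.range (m + 1), f i := by
      rw [hS, Finset.mul_sum]
      refine Finset.sum_congr rfl fun i hi => ?_
      have hi' : i ≤ m := Nat.lt_succ_iff.mp (Finset.mem_range.mp hi)
      have h1 : m + 1 - i = (m - i) + 1 := by omega
      rw [hc, hf]
      simp only [h1, pow_succ]
      have h2' : a ^ (m - i) ≠ 0 := pow_ne_zero _ ha0
      field_simp
    have hB : (∑ i ∈ Finset.range (m + 1), c i * (i * z ^ (i - 1)))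
        = ∑ i ∈ Finset.range m, f i := by
      rw [Finset.sum_range_succ']
      simp only [Nat.cast_zero, zero_mul, mul_zero, add_zero]
      refine Finset.sum_congr rfl fun i _ => ?_
      have h3 : m + 1 - (i + 1) = m - i := by omega
      simp only [hc, hf, h3, Nat.add_sub_cancel, Nat.factorial_succ]
      have h5 : (i.factorial : ℂ) ≠ 0 := by exact_mod_cast i.factorial_ne_zero
      push_cast
      field_simp
    rw [hA, hB, Finset.sum_range_succ, hf]
    have h6 : (m.factorial : ℂ) ≠ 0 := by exact_mod_cast m.factorial_ne_zero
    simp [div_self h6]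
  have hderiv : ∀ x : ℝ, x ∈ Set.Ici (0:ℝ) →
      HasDerivAt F ((x : ℂ) ^ m * Complex.exp (-a * x)) x := by
    intro x _
    have hG : HasDerivAt (fun z : ℂ => -(Complex.exp (-a * z) * S z))
        ((x : ℂ) ^ m * Complex.exp (-a * x)) (x : ℂ) := by
      have h1 : HasDerivAt (fun z : ℂ => Complex.exp (-a * z))
          (Complex.exp (-a * x) * (-a)) (x : ℂ) := by
        simpa using ((hasDerivAt_id (x:ℂ)).const_mul (-a)).cexp
      have h2 : HasDerivAt S (∑ i ∈ Finset.range (m + 1), c i * (i * (x:ℂ) ^ (i - 1))) (x:ℂ) := by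
        rw [hS]
        refine HasDerivAt.fun_sum fun i _ => ?_
        simpa using (hasDerivAt_pow i (x:ℂ)).const_mul (c i)
      have h3 := (h1.fun_mul h2).fun_neg
      refine h3.congr_deriv ?_
      have hk := key (x : ℂ)
      rw [← hk]
      ring
    exact hG.comp_ofReal
  have htend : Tendsto F atTop (nhds 0) := by
    have hbound : ∀ᶠ x : ℝ in atTop, ‖F x‖ ≤
        ∑ i ∈ Finset.range (m + 1), ‖c i‖ * (x ^ i * Real.exp (-a.re * x)) := by
      filter_upwards [eventually_ge_atTop (0:ℝ)] with x hx
      have h1 : ‖F x‖ = Real.exp (-a.re * x) * ‖S (x:ℂ)‖ := by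
        rw [hF]
        simp only [norm_neg, norm_mul]
        congr 1
        rw [Complex.norm_exp]
        congr 1
        simp [Complex.mul_re]
      rw [h1]
      have h2 : ‖S (x:ℂ)‖ ≤ ∑ i ∈ Finset.range (m + 1), ‖c i‖ * x ^ i := by
        refine (norm_sum_le _ _).trans (Finset.sum_le_sum fun i _ => le_of_eq ?_)
        rw [norm_mul, norm_pow]
        congr 1
        simp [Complex.norm_real, _root_.abs_of_nonneg hx]
      calc Real.exp (-a.re * x) * ‖S (x:ℂ)‖
          ≤ Real.exp (-a.re * x) * ∑ i ∈ Finset.range (m + 1), ‖c i‖ * x ^ i := by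
            gcongr
        _ = ∑ i ∈ Finset.range (m + 1), ‖c i‖ * (x ^ i * Real.exp (-a.re * x)) := by
            rw [Finset.mul_sum]; exact Finset.sum_congr rfl fun i _ => by ring
    have hlim : Tendsto (fun x : ℝ => ∑ i ∈ Finset.range (m + 1),
        ‖c i‖ * (x ^ i * Real.exp (-a.re * x))) atTop (nhds 0) := by
      have : Tendsto (fun x : ℝ => ∑ i ∈ Finset.range (m + 1),
          ‖c i‖ * (x ^ i * Real.exp (-a.re * x))) atTop
          (nhds (∑ i ∈ Finset.range (m + 1), ‖c i‖ * 0)) := by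
        refine tendsto_finset_sum _ fun i _ => ((aux_tendsto ha i).const_mul _)
      simpa using this
    exact squeeze_zero_norm' hbound hlim
  have := integral_Ioi_of_hasDerivAt_of_tendsto' hderiv (aux_integrable a ha m) htend
  rw [this]
  have hS0 : S 0 = c 0 := by
    show (∑ i ∈ Finset.range (m + 1), c i * (0:ℂ) ^ i) = c 0
    rw [Finset.sum_range_succ']
    simp
  rw [hF]
  simp only [Complex.ofReal_zero, mul_zero, Complex.exp_zero, one_mul, hS0, hc]
  simp [Nat.factorial]

/-- coefficient in the iterated-derivative expansion -/
noncomputable def Kco (x : ℂ) (n i : ℕ) : ℂ :=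
  (n.choose i : ℂ) * (-x) ^ (n - i) * (-1) ^ i * (i.factorial : ℂ)

lemma Kco_zero (x : ℂ) (n : ℕ) : Kco x (n + 1) 0 = (-x) * Kco x n 0 := by
  simp [Kco, pow_succ]
  ring

lemma Kco_top (x : ℂ) (n : ℕ) : Kco x n (n + 1) = 0 := by
  simp [Kco, Nat.choose_succ_self]

lemma Kco_succ (x : ℂ) (n i : ℕ) :
    Kco x (n + 1) (i + 1) = (-x) * Kco x n (i + 1) + (-((i:ℂ) + 1)) * Kco x n i := by
  rcases Nat.lt_or_ge i n with h | h
  · have h1 : n + 1 - (i + 1) = (n - (i + 1)) + 1 := by omega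
    have h2 : n - i = (n - (i + 1)) + 1 := by omega
    rw [Kco, Kco, Kco, Nat.choose_succ_succ, h1, h2, Nat.factorial_succ]
    push_cast
    ring
  · rcases Nat.eq_or_lt_of_le h with rfl | h'
    · rw [Kco_top, mul_zero, zero_add]
      simp only [Kco, Nat.choose_self, Nat.sub_self, Nat.factorial_succ, pow_succ]
      push_cast
      ring
    · have e1 : n.choose (i + 1) = 0 := Nat.choose_eq_zero_of_lt (by omega)
      have e2 : n.choose i = 0 := Nat.choose_eq_zero_of_lt h'
      have e3 : (n + 1).choose (i + 1) = 0 := Nat.choose_eq_zero_of_lt (by omega)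
      simp [Kco, e1, e2, e3]

lemma iterderiv_formula (s : ℂ) (x : ℝ) (n : ℕ) : ∀ b : ℂ, s + b ≠ 0 →
    iteratedDeriv n (fun b : ℂ => Complex.exp (-b * x) / (s + b)) b
      = ∑ i ∈ Finset.range (n + 1),
          Kco x n i * (Complex.exp (-b * x) * ((s + b) ^ (i + 1))⁻¹) := by
  induction n with
  | zero =>
    intro b hb
    simp [Kco, iteratedDeriv_zero, div_eq_mul_inv]
  | succ n ih =>
    intro b hb
    rw [iteratedDeriv_succ]
    have hU : IsOpen {b : ℂ | s + b ≠ 0} := by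
      have : {b : ℂ | s + b ≠ 0} = (fun b => s + b) ⁻¹' {0}ᶜ := rfl
      exact (isOpen_compl_singleton).preimage (continuous_const.add continuous_id)
    have hev : iteratedDeriv n (fun b : ℂ => Complex.exp (-b * x) / (s + b))
        =ᶠ[nhds b] fun b => ∑ i ∈ Finset.range (n + 1),
          Kco x n i * (Complex.exp (-b * x) * ((s + b) ^ (i + 1))⁻¹) := by
      filter_upwards [hU.mem_nhds hb] with y hy
      exact ih y hy
    rw [hev.deriv_eq]
    -- derivative of the explicit sum
    have hder : HasDerivAt (fun b : ℂ => ∑ i ∈ Finset.range (n + 1),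
        Kco x n i * (Complex.exp (-b * x) * ((s + b) ^ (i + 1))⁻¹))
        (∑ i ∈ Finset.range (n + 1), Kco x n i *
          (Complex.exp (-b * x) * (-x) * ((s + b) ^ (i + 1))⁻¹ +
            Complex.exp (-b * x) *
              (-(((i:ℂ) + 1) * (s + b) ^ (i + 1 - 1) * 1) / ((s + b) ^ (i + 1)) ^ 2))) b := by
      refine HasDerivAt.fun_sum fun i _ => ?_
      have h1 : HasDerivAt (fun b : ℂ => Complex.exp (-b * x))
          (Complex.exp (-b * x) * (-(x:ℂ))) b := by
        have := ((hasDerivAt_id b).neg.mul_const (x:ℂ)).cexp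
        simpa using this
      have h2 : HasDerivAt (fun b : ℂ => ((s + b) ^ (i + 1))⁻¹)
          (-(((i:ℂ) + 1) * (s + b) ^ (i + 1 - 1) * 1) / ((s + b) ^ (i + 1)) ^ 2) b := by
        have hp : HasDerivAt (fun b : ℂ => (s + b) ^ (i + 1))
            (((i:ℂ) + 1) * (s + b) ^ (i + 1 - 1) * 1) b := by
          have := ((hasDerivAt_id b).const_add s).fun_pow (i + 1)
          simpa using this
        exact hp.inv (pow_ne_zero _ hb)
      exact (h1.mul h2).const_mul _
    rw [hder.deriv]
    -- rewrite each raw derivative term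
    have hterm : ∀ i ∈ Finset.range (n + 1), Kco x n i *
          (Complex.exp (-b * x) * (-x) * ((s + b) ^ (i + 1))⁻¹ +
            Complex.exp (-b * x) *
              (-(((i:ℂ) + 1) * (s + b) ^ (i + 1 - 1) * 1) / ((s + b) ^ (i + 1)) ^ 2))
        = (-(x:ℂ)) * Kco x n i * (Complex.exp (-b * x) * ((s + b) ^ (i + 1))⁻¹)
          + (-((i:ℂ) + 1)) * Kco x n i * (Complex.exp (-b * x) * ((s + b) ^ (i + 2))⁻¹) := by
      intro i _
      have hp1 : ((s + b) ^ (i + 1)) ≠ 0 := pow_ne_zero _ hb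
      have hp2 : ((s + b) ^ (i + 2)) ≠ 0 := pow_ne_zero _ hb
      rw [Nat.add_sub_cancel]
      field_simp
      ring
    rw [Finset.sum_congr rfl hterm, Finset.sum_add_distrib]
    -- now the Pascal-style reindexing
    rw [Finset.sum_range_succ' (fun i => Kco x (n + 1) i *
      (Complex.exp (-b * x) * ((s + b) ^ (i + 1))⁻¹)) (n + 1)]
    have hrec : ∀ i ∈ Finset.range (n + 1), Kco x (n + 1) (i + 1) *
          (Complex.exp (-b * x) * ((s + b) ^ (i + 1 + 1))⁻¹)
        = (-(x:ℂ)) * Kco x n (i + 1) * (Complex.exp (-b * x) * ((s + b) ^ (i + 1 + 1))⁻¹)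
          + (-((i:ℂ) + 1)) * Kco x n i * (Complex.exp (-b * x) * ((s + b) ^ (i + 2))⁻¹) := by
      intro i _
      rw [Kco_succ]
      ring
    rw [Finset.sum_congr rfl hrec, Finset.sum_add_distrib, Kco_zero]
    have hfin : (∑ i ∈ Finset.range (n + 1), (-(x:ℂ)) * Kco x n (i + 1) *
          (Complex.exp (-b * x) * ((s + b) ^ (i + 1 + 1))⁻¹))
          + (-(x:ℂ)) * Kco x n 0 * (Complex.exp (-b * x) * ((s + b) ^ (0 + 1))⁻¹)
        = ∑ i ∈ Finset.range (n + 1), (-(x:ℂ)) * Kco x n i *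
          (Complex.exp (-b * x) * ((s + b) ^ (i + 1))⁻¹) := by
      calc (∑ i ∈ Finset.range (n + 1), (-(x:ℂ)) * Kco x n (i + 1) *
            (Complex.exp (-b * x) * ((s + b) ^ (i + 1 + 1))⁻¹))
            + (-(x:ℂ)) * Kco x n 0 * (Complex.exp (-b * x) * ((s + b) ^ (0 + 1))⁻¹)
          = ∑ i ∈ Finset.range (n + 2), (-(x:ℂ)) * Kco x n i *
            (Complex.exp (-b * x) * ((s + b) ^ (i + 1))⁻¹) :=
            (Finset.sum_range_succ' (fun i => (-(x:ℂ)) * Kco x n i *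
              (Complex.exp (-b * x) * ((s + b) ^ (i + 1))⁻¹)) (n + 1)).symm
        _ = ∑ i ∈ Finset.range (n + 1), (-(x:ℂ)) * Kco x n i *
            (Complex.exp (-b * x) * ((s + b) ^ (i + 1))⁻¹) := by
            rw [Finset.sum_range_succ, Kco_top]
            ring
    linear_combination -hfin

lemma aux_geom (n : ℕ) {a b : ℂ} (ha : a ≠ 0) (hb : b ≠ 0) (hab : b ≠ a) :
    ∑ i ∈ Finset.range (n + 1), (a ^ (i + 1) * b ^ (n - i + 1))⁻¹
      = ((a ^ (n + 1))⁻¹ - (b ^ (n + 1))⁻¹) / (b - a) := by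
  have hba : b - a ≠ 0 := sub_ne_zero.mpr hab
  rw [eq_div_iff hba, ← inv_pow, ← inv_pow]
  have key := geom_sum₂_mul (a⁻¹) (b⁻¹) (n + 1)
  have h1 : ∀ i ∈ Finset.range (n + 1), (a ^ (i + 1) * b ^ (n - i + 1))⁻¹
      = a⁻¹ * b⁻¹ * (a⁻¹ ^ i * b⁻¹ ^ (n + 1 - 1 - i)) := by
    intro i hi
    have h2 : n + 1 - 1 - i = n - i := by omega
    rw [h2, mul_inv, ← inv_pow, ← inv_pow, pow_succ, pow_succ]
    ring
  rw [Finset.sum_congr rfl h1, ← Finset.mul_sum]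
  set S := ∑ i ∈ Finset.range (n + 1), a⁻¹ ^ i * b⁻¹ ^ (n + 1 - 1 - i) with hSdef
  linear_combination key + S * a⁻¹ * (inv_mul_cancel₀ hb) - S * b⁻¹ * (inv_mul_cancel₀ ha)

/-- Analytic core of formula (2.33) in Lemma 2.5: the Laplace transform in `x` of the
overshoot-density expansion equals `(ψ⁺(θ)/ψ⁺(s) − 1)/(s − θ)`, where
`ψ⁺(s) = C₀ + ∑_{k,j} C_{kj}/(s+β_k)^j`. -/
theorem paper_eq_2_33 (K : ℕ) (β : Fin K → ℂ)
    (hβinj : Function.Injective β) (hβre : ∀ k, 0 < (β k).re)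
    (M : Fin K → ℕ) (hM : ∀ k, 1 ≤ M k)
    (C0 : ℂ) (C : Fin K → ℕ → ℂ) (ψp : ℂ → ℂ)
    (hψp : ∀ s : ℂ, 0 ≤ s.re →
      ψp s = C0 + ∑ k, ∑ j ∈ Finset.Icc 1 (M k), C k j / (s + β k) ^ j)
    (θ s : ℂ) (hθ : 0 < θ.re) (hs : 0 ≤ s.re) (hsθ : s ≠ θ) (hψs : ψp s ≠ 0) :
    MeasureTheory.IntegrableOn
      (fun x : ℝ => Complex.exp (-θ * x) * (1 / ψp s) *
        ∑ k, ∑ j ∈ Finset.Icc 1 (M k),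
          C k j * ((-1) ^ (j - 1) / (Nat.factorial (j - 1) : ℂ)) *
            iteratedDeriv (j - 1) (fun b : ℂ => Complex.exp (-b * x) / (s + b)) (β k))
      (Set.Ioi 0) ∧
    ∫ x : ℝ in Set.Ioi 0, Complex.exp (-θ * x) * (1 / ψp s) *
        ∑ k, ∑ j ∈ Finset.Icc 1 (M k),
          C k j * ((-1) ^ (j - 1) / (Nat.factorial (j - 1) : ℂ)) *
            iteratedDeriv (j - 1) (fun b : ℂ => Complex.exp (-b * x) / (s + b)) (β k)
      = (1 / (s - θ)) * (ψp θ / ψp s - 1) := by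
  have hθs : θ - s ≠ 0 := sub_ne_zero.mpr (Ne.symm hsθ)
  have hsβ : ∀ k, s + β k ≠ 0 := by
    intro k
    have h0 : 0 < (s + β k).re := by
      rw [Complex.add_re]; have := hβre k; linarith
    intro h; rw [h] at h0; simp at h0
  have hθβ : ∀ k, 0 < (θ + β k).re := by
    intro k; rw [Complex.add_re]; have := hβre k; linarith
  have hθβ0 : ∀ k, θ + β k ≠ 0 := by
    intro k; intro h; have h0 := hθβ k; rw [h] at h0; simp at h0
  -- the coefficient in the expansion
  set d : Fin K → ℕ → ℕ → ℂ := fun k j i =>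
    C k j * (((j - 1).factorial : ℂ))⁻¹ * (((j - 1).choose i : ℕ) : ℂ) * (i.factorial : ℂ)
      * ((s + β k) ^ (i + 1))⁻¹ with hd
  set G : ℝ → ℂ := fun x => ∑ k, ∑ j ∈ Finset.Icc 1 (M k), ∑ i ∈ Finset.range j,
    d k j i * ((x : ℂ) ^ (j - 1 - i) * Complex.exp (-(θ + β k) * x)) with hG
  -- pointwise identification of the integrand
  have hfun : (fun x : ℝ => Complex.exp (-θ * x) * (1 / ψp s) *
        ∑ k, ∑ j ∈ Finset.Icc 1 (M k),
          C k j * ((-1) ^ (j - 1) / (Nat.factorial (j - 1) : ℂ)) *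
            iteratedDeriv (j - 1) (fun b : ℂ => Complex.exp (-b * x) / (s + b)) (β k))
      = fun x : ℝ => (1 / ψp s) * G x := by
    funext x
    rw [hG]
    rw [mul_comm (Complex.exp (-θ * x)) (1 / ψp s), mul_assoc, Finset.mul_sum]
    congr 1
    refine Finset.sum_congr rfl fun k _ => ?_
    rw [Finset.mul_sum]
    refine Finset.sum_congr rfl fun j hj => ?_
    have hj1 : 1 ≤ j := (Finset.mem_Icc.mp hj).1
    have hjj : j - 1 + 1 = j := Nat.sub_add_cancel hj1
    rw [iterderiv_formula s x (j - 1) (β k) (hsβ k), hjj, Finset.mul_sum, Finset.mul_sum]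
    refine Finset.sum_congr rfl fun i hi => ?_
    have hi' : i ≤ j - 1 := by
      have := Finset.mem_range.mp hi; omega
    rw [hd, Kco]
    have hexp : Complex.exp (-(θ + β k) * x)
        = Complex.exp (-θ * x) * Complex.exp (-(β k) * x) := by
      rw [← Complex.exp_add]; congr 1; ring
    have hxpow : (-(x:ℂ)) ^ (j - 1 - i) = (-1) ^ (j - 1 - i) * (x:ℂ) ^ (j - 1 - i) := by
      rw [neg_pow]
    have hsign : ((-1 : ℂ)) ^ (j - 1) * ((-1 : ℂ)) ^ (j - 1 - i) * ((-1 : ℂ)) ^ i = 1 := by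
      rw [← pow_add, ← pow_add]
      have he : j - 1 + (j - 1 - i) + i = (j - 1) + (j - 1) := by omega
      rw [he]
      exact Even.neg_one_pow ⟨j - 1, rfl⟩
    rw [hexp, hxpow, div_eq_mul_inv]
    linear_combination (C k j * (((j - 1).factorial : ℂ))⁻¹
      * (((j - 1).choose i : ℕ) : ℂ) * (i.factorial : ℂ)
      * ((s + β k) ^ (i + 1))⁻¹ * (x:ℂ) ^ (j - 1 - i) * Complex.exp (-θ * x)
      * Complex.exp (-(β k) * x)) * hsign
  have hterm_int : ∀ (k : Fin K) (j i : ℕ), IntegrableOn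
      (fun x : ℝ => d k j i * ((x : ℂ) ^ (j - 1 - i) * Complex.exp (-(θ + β k) * x)))
      (Set.Ioi 0) :=
    fun k j i => (aux_integrable (θ + β k) (hθβ k) (j - 1 - i)).const_mul _
  have hGint : IntegrableOn G (Set.Ioi 0) := by
    rw [hG]
    exact integrable_finset_sum _ fun k _ => integrable_finset_sum _ fun j _ =>
      integrable_finset_sum _ fun i _ => hterm_int k j i
  rw [hfun]
  constructor
  · exact hGint.const_mul _
  · rw [MeasureTheory.integral_const_mul]
    have hIG : ∫ x : ℝ in Set.Ioi 0, G x
        = ∑ k, ∑ j ∈ Finset.Icc 1 (M k), ∑ i ∈ Finset.range j,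
          d k j i * (((j - 1 - i).factorial : ℂ) / (θ + β k) ^ (j - 1 - i + 1)) := by
      rw [hG, MeasureTheory.integral_finset_sum _ fun k _ => integrable_finset_sum _
        fun j _ => integrable_finset_sum _ fun i _ => hterm_int k j i]
      refine Finset.sum_congr rfl fun k _ => ?_
      rw [MeasureTheory.integral_finset_sum _ fun j _ => integrable_finset_sum _
        fun i _ => hterm_int k j i]
      refine Finset.sum_congr rfl fun j _ => ?_
      rw [MeasureTheory.integral_finset_sum _ fun i _ => hterm_int k j i]
      refine Finset.sum_congr rfl fun i _ => ?_
      rw [MeasureTheory.integral_const_mul, aux_integral (θ + β k) (hθβ k) (j - 1 - i)]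
    rw [hIG]
    -- evaluate the inner sums
    have hkj : ∀ (k : Fin K), ∀ j ∈ Finset.Icc 1 (M k),
        ∑ i ∈ Finset.range j, d k j i * (((j - 1 - i).factorial : ℂ) / (θ + β k) ^ (j - 1 - i + 1))
          = C k j * ((((s + β k) ^ j)⁻¹ - ((θ + β k) ^ j)⁻¹) / (θ - s)) := by
      intro k j hj
      have hj1 : 1 ≤ j := (Finset.mem_Icc.mp hj).1
      have hjj : j - 1 + 1 = j := Nat.sub_add_cancel hj1
      have h1 : ∀ i ∈ Finset.range j,
          d k j i * (((j - 1 - i).factorial : ℂ) / (θ + β k) ^ (j - 1 - i + 1))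
            = C k j * ((s + β k) ^ (i + 1) * (θ + β k) ^ (j - 1 - i + 1))⁻¹ := by
        intro i hi
        have hi' : i ≤ j - 1 := by have := Finset.mem_range.mp hi; omega
        have hcf : (((j - 1).choose i : ℕ) : ℂ) * (i.factorial : ℂ)
            * (((j - 1 - i).factorial : ℂ)) = (((j - 1).factorial : ℂ)) := by
          exact_mod_cast congrArg (Nat.cast : ℕ → ℂ)
            (Nat.choose_mul_factorial_mul_factorial hi')
        have hfne : (((j - 1).factorial : ℂ)) ≠ 0 := by
          exact_mod_cast (j - 1).factorial_ne_zero
        rw [hd, mul_inv, div_eq_mul_inv]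
        linear_combination (C k j * ((s + β k) ^ (i + 1))⁻¹
            * ((θ + β k) ^ (j - 1 - i + 1))⁻¹ * (((j - 1).factorial : ℂ))⁻¹) * hcf
          + (C k j * ((s + β k) ^ (i + 1))⁻¹ * ((θ + β k) ^ (j - 1 - i + 1))⁻¹)
            * (inv_mul_cancel₀ hfne)
      rw [Finset.sum_congr rfl h1, ← Finset.mul_sum]
      congr 1
      have hgeo := aux_geom (j - 1) (a := s + β k) (b := θ + β k) (hsβ k) (hθβ0 k)
        (by intro h; exact hθs (by linear_combination h))
      rw [hjj] at hgeo
      rw [hgeo]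
      congr 1
      ring
    rw [show (∑ k, ∑ j ∈ Finset.Icc 1 (M k), ∑ i ∈ Finset.range j,
        d k j i * (((j - 1 - i).factorial : ℂ) / (θ + β k) ^ (j - 1 - i + 1)))
      = ∑ k, ∑ j ∈ Finset.Icc 1 (M k),
          C k j * ((((s + β k) ^ j)⁻¹ - ((θ + β k) ^ j)⁻¹) / (θ - s))
      from Finset.sum_congr rfl fun k _ => Finset.sum_congr rfl fun j hj => hkj k j hj]
    -- identify with ψ⁺ values
    have hsum : ∑ k, ∑ j ∈ Finset.Icc 1 (M k),
        C k j * ((((s + β k) ^ j)⁻¹ - ((θ + β k) ^ j)⁻¹) / (θ - s))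
        = ((ψp s - C0) - (ψp θ - C0)) / (θ - s) := by
      rw [hψp s hs, hψp θ hθ.le]
      simp only [add_sub_cancel_left]
      rw [← Finset.sum_sub_distrib, Finset.sum_div]
      refine Finset.sum_congr rfl fun k _ => ?_
      rw [← Finset.sum_sub_distrib, Finset.sum_div]
      refine Finset.sum_congr rfl fun j _ => ?_
      rw [div_eq_mul_inv (C k j), div_eq_mul_inv (C k j)]
      ring
    rw [hsum]
    have hψθs : ψp s - ψp θ = (ψp s - C0) - (ψp θ - C0) := by ring
    rw [← hψθs]
    have hsθ' : s - θ ≠ 0 := sub_ne_zero.mpr hsθ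
    field_simp
    ring
end

section
/- Let γ₁,…,γ_K be pairwise distinct complex numbers with positive real parts, with multiplicities N₁,…,N_K ≥ 1, and let D₀ ∈ ℂ and D_{kj} ∈ ℂ (1 ≤ k ≤ K, 1 ≤ j ≤ N_k). Define ψ⁻(s) = D₀ + ∑_{k=1}^{K} ∑_{j=1}^{N_k} D_{kj}/(s+γ_k)^j for s ∈ ℂ with Re(s) ≥ 0. Let θ, s ∈ ℂ with Re(θ) > 0, Re(s) ≥ 0, s ≠ θ, and ψ⁻(s) ≠ 0. Then the function x ↦ e^{θx}·(1/ψ⁻(s))·∑_{k=1}^{K} ∑_{j=1}^{N_k} D_{kj}·((−1)^{j−1}/(j−1)!)·iteratedDeriv (j−1) (g ↦ e^{gx}/(s+g)) (γ_k) is integrable on (−∞,0) and ∫_{−∞}^0 e^{θx}·(1/ψ⁻(s))·∑_{k=1}^{K} ∑_{j=1}^{N_k} D_{kj}·((−1)^{j−1}/(j−1)!)·iteratedDeriv (j−1) (g ↦ e^{gx}/(s+g)) (γ_k) dx = (1/(s−θ))·(ψ⁻(θ)/ψ⁻(s) − 1). -/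
open MeasureTheory Complex Finset
open Set Filter

set_option linter.unusedVariables false
set_option linter.unusedTactic false

lemma my_tendsto_pow_exp (n : ℕ) {c : ℝ} (hc : 0 < c) :
    Tendsto (fun y : ℝ => y ^ n * Real.exp (-(c * y))) atTop (nhds 0) := by
  have h := isLittleO_pow_exp_pos_mul_atTop n hc
  rw [Asymptotics.isLittleO_iff_tendsto (fun x hx => absurd hx (Real.exp_ne_zero _))] at h
  refine h.congr fun x => ?_
  rw [Real.exp_neg, div_eq_mul_inv]

lemma my_aux_integrable (n : ℕ) (b : ℂ) (hb : 0 < b.re) :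
    IntegrableOn (fun x : ℝ => (x : ℂ) ^ n * Complex.exp (b * x)) (Set.Iic 0) := by
  have m : MeasurableEmbedding (fun x : ℝ => -x) := (Homeomorph.neg ℝ).measurableEmbedding
  rw [← Measure.map_neg_eq_self (volume : Measure ℝ), m.integrableOn_map_iff]
  have hpre : (fun x : ℝ => -x) ⁻¹' (Set.Iic 0) = Set.Ici 0 := by ext x; simp
  have hcomp : (fun x : ℝ => (x:ℂ)^n * Complex.exp (b*x)) ∘ (fun x : ℝ => -x)
      = fun x : ℝ => ((-x:ℝ):ℂ)^n * Complex.exp (b * (-x:ℝ)) := rfl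
  rw [hcomp, hpre, integrableOn_Ici_iff_integrableOn_Ioi]
  have hmaj : IntegrableOn (fun x : ℝ => x ^ n * Real.exp (-(b.re * x))) (Set.Ioi 0) := by
    apply integrable_of_isBigO_exp_neg (half_pos hb) (f := fun x => x ^ n * Real.exp (-(b.re*x)))
    · exact ((continuous_pow n).mul (Real.continuous_exp.comp (by continuity))).continuousOn
    · rw [Asymptotics.isBigO_iff]
      refine ⟨1, ?_⟩
      have ht : Tendsto (fun y : ℝ => y ^ n * Real.exp (-(b.re/2 * y))) atTop (nhds 0) :=
        my_tendsto_pow_exp n (half_pos hb)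
      have h2 := ht.eventually (eventually_le_nhds (by norm_num : (0:ℝ) < 1))
      filter_upwards [h2, eventually_ge_atTop (0:ℝ)] with x hx hx0
      have hxpow : |x ^ n * Real.exp (-(b.re * x))| = x ^ n * Real.exp (-(b.re*x)) :=
        _root_.abs_of_nonneg (by positivity)
      rw [Real.norm_eq_abs, hxpow, Real.norm_eq_abs, Real.abs_exp, one_mul]
      have he : x ^ n * Real.exp (-(b.re * x)) = (x ^ n * Real.exp (-(b.re/2 * x))) * Real.exp (-(b.re/2)*x) := by
        rw [mul_assoc, ← Real.exp_add]; ring_nf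
      rw [he]
      exact mul_le_of_le_one_left (Real.exp_nonneg _) hx
  refine Integrable.mono' hmaj ?_ ?_
  · apply Continuous.aestronglyMeasurable
    continuity
  · filter_upwards [ae_restrict_mem measurableSet_Ioi] with x hx
    have hx0 : (0:ℝ) ≤ x := le_of_lt hx
    rw [norm_mul, norm_pow]
    have h1 : ‖((-x:ℝ):ℂ)‖ = x := by
      rw [Complex.norm_real, Real.norm_eq_abs, abs_neg, _root_.abs_of_nonneg hx0]
    have h2 : ‖Complex.exp (b * (-x:ℝ))‖ = Real.exp (-(b.re * x)) := by
      rw [Complex.norm_exp]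
      congr 1
      simp [Complex.mul_re]
    rw [h1, h2]

lemma my_tendsto_atBot (n : ℕ) (b : ℂ) (hb : 0 < b.re) :
    Tendsto (fun x : ℝ => (x:ℂ)^n * Complex.exp (b*x)) atBot (nhds 0) := by
  rw [tendsto_zero_iff_norm_tendsto_zero]
  apply Tendsto.congr' _ ((my_tendsto_pow_exp n hb).comp tendsto_neg_atBot_atTop)
  filter_upwards [eventually_le_atBot (0:ℝ)] with x hx
  simp only [Function.comp_apply, norm_mul, norm_pow, Complex.norm_real, Real.norm_eq_abs,
    Complex.norm_exp]
  rw [_root_.abs_of_nonpos hx]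
  congr 2
  simp [Complex.mul_re]

lemma my_aux_integral (b : ℂ) (hb : 0 < b.re) : ∀ n : ℕ,
    ∫ x in Set.Iic (0:ℝ), (x:ℂ)^n * Complex.exp (b*x) = (-1)^n * (Nat.factorial n) / b^(n+1) := by
  have hbne : b ≠ 0 := fun h => by simp [h] at hb
  have hexp : ∀ x : ℝ, HasDerivAt (fun x : ℝ => Complex.exp (b*x)) (b * Complex.exp (b*x)) x := by
    intro x
    have h1 : HasDerivAt (fun z : ℂ => Complex.exp (b*z)) (b * Complex.exp (b*x)) (x:ℂ) := by
      have := (Complex.hasDerivAt_exp (b*x)).comp (x:ℂ) ((hasDerivAt_id (x:ℂ)).const_mul b)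
      simpa [mul_comm, Function.comp_def] using this
    exact h1.comp_ofReal
  intro n; induction n with
  | zero =>
    have hderiv : ∀ x : ℝ, HasDerivAt (fun x : ℝ => Complex.exp (b*x)/b) ((x:ℂ)^0 * Complex.exp (b*x)) x := by
      intro x
      simpa [pow_zero, one_mul, mul_comm, mul_div_assoc, mul_div_cancel_left₀ _ hbne] using (hexp x).div_const b
    have key := integral_Iic_of_hasDerivAt_of_tendsto' (fun x _ => hderiv x)
      (my_aux_integrable 0 b hb) (((my_tendsto_atBot 0 b hb).div_const b).congr (by simp [pow_zero]))
    rw [key]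
    simp
  | succ n ih =>
    set F' : ℝ → ℂ := fun x => ((n+1:ℂ)*(x:ℂ)^n) * Complex.exp (b*x) + (x:ℂ)^(n+1) * (b * Complex.exp (b*x)) with hF'
    have hderiv : ∀ x : ℝ, HasDerivAt (fun x : ℝ => (x:ℂ)^(n+1) * Complex.exp (b*x)) (F' x) x := by
      intro x
      have h1 : HasDerivAt (fun x : ℝ => (x:ℂ)^(n+1)) ((n+1:ℂ)*(x:ℂ)^n) x := by
        have := (hasDerivAt_pow (n+1) (x:ℂ)).comp_ofReal
        simpa using this
      exact h1.mul (hexp x)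
    have hint1 := (my_aux_integrable n b hb).const_mul ((n:ℂ)+1)
    have hint2 := (my_aux_integrable (n+1) b hb).const_mul b
    have hintF' : IntegrableOn F' (Set.Iic 0) := by
      apply Integrable.add
      · exact IntegrableOn.congr_fun hint1 (fun x _ => by push_cast; ring) measurableSet_Iic
      · exact IntegrableOn.congr_fun hint2 (fun x _ => by push_cast; ring) measurableSet_Iic
    have key := integral_Iic_of_hasDerivAt_of_tendsto' (fun x _ => hderiv x) hintF'
      (my_tendsto_atBot (n+1) b hb)
    have hsplit : ∫ x in Set.Iic (0:ℝ), F' x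
        = ((n:ℂ)+1) * (∫ x in Set.Iic (0:ℝ), (x:ℂ)^n * Complex.exp (b*x))
          + b * (∫ x in Set.Iic (0:ℝ), (x:ℂ)^(n+1) * Complex.exp (b*x)) := by
      rw [hF']
      rw [integral_add (IntegrableOn.congr_fun hint1 (fun x _ => by push_cast; ring) measurableSet_Iic)
        (IntegrableOn.congr_fun hint2 (fun x _ => by push_cast; ring) measurableSet_Iic)]
      rw [← integral_const_mul, ← integral_const_mul]
      congr 1
      · apply setIntegral_congr_fun measurableSet_Iic; intro x _; push_cast; ring
      · apply setIntegral_congr_fun measurableSet_Iic; intro x _; push_cast; ring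
    rw [hsplit, ih] at key
    simp only [Complex.ofReal_zero, ne_eq, zero_pow, Nat.succ_ne_zero, not_false_iff, zero_mul, mul_zero, sub_zero] at key
    -- key : (n+1) * ((-1)^n * n! / b^(n+1)) + b * ∫ ... = 0
    have hb2 : b^(n+1+1) ≠ 0 := pow_ne_zero _ hbne
    have hkey2 : b * (∫ x in Set.Iic (0:ℝ), (x:ℂ)^(n+1) * Complex.exp (b*x))
        = -(((n:ℂ)+1) * ((-1)^n * (Nat.factorial n) / b^(n+1))) := by linear_combination key
    apply mul_left_cancel₀ hbne
    rw [hkey2]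
    push_cast [Nat.factorial_succ]
    field_simp
    ring

noncomputable def myCC (x : ℝ) (m i : ℕ) : ℂ :=
  (m.choose i : ℂ) * (Nat.factorial i : ℂ) * (-1)^i * (x:ℂ)^(m-i)

lemma myCC_rec (x : ℝ) (m i : ℕ) (h : i ≤ m + 1) :
    myCC x (m+1) i = (x:ℂ) * myCC x m i - i * myCC x m (i-1) := by
  unfold myCC
  rcases Nat.lt_or_ge i (m+1) with hi | hi
  · -- i ≤ m
    have him : i ≤ m := Nat.lt_succ_iff.mp hi
    have hsub : m + 1 - i = (m - i) + 1 := by omega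
    rw [hsub, pow_succ]
    cases i with
    | zero => simp; ring
    | succ j =>
      have hjm : j ≤ m := by omega
      have hsub2 : m - j = (m - (j+1)) + 1 := by omega
      rw [Nat.choose_succ_succ m j, Nat.add_sub_cancel]
      push_cast [Nat.factorial_succ, hsub2, pow_succ]
      ring
  · -- i = m+1
    have : i = m + 1 := le_antisymm h hi
    subst this
    have e1 : m - (m+1) = 0 := by omega
    have e2 : m + 1 - 1 = m := by omega
    have e3 : m + 1 - (m+1) = 0 := by omega
    have e4 : m - m = 0 := by omega
    rw [Nat.choose_succ_self m, Nat.choose_self, e1, e2, e3, e4, Nat.choose_self]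
    push_cast [Nat.factorial_succ]
    ring

lemma my_iterDeriv (s : ℂ) (x : ℝ) : ∀ (m : ℕ) (γ : ℂ), s + γ ≠ 0 →
    iteratedDeriv m (fun g : ℂ => Complex.exp (g * x) / (s + g)) γ
      = ∑ i ∈ range (m+1), myCC x m i * Complex.exp (γ * x) / (s+γ)^(i+1) := by
  intro m
  induction m with
  | zero =>
    intro γ hγ
    simp [iteratedDeriv_zero, myCC]
  | succ m ih =>
    intro γ hγ
    have hU : IsOpen {g : ℂ | s + g ≠ 0} :=
      isOpen_ne.preimage (by continuity)
    have hev : (iteratedDeriv m (fun g : ℂ => Complex.exp (g * x) / (s + g)))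
        =ᶠ[nhds γ] (fun g => ∑ i ∈ range (m+1), myCC x m i * Complex.exp (g * x) / (s+g)^(i+1)) := by
      filter_upwards [hU.mem_nhds hγ] with g hg using ih g hg
    rw [iteratedDeriv_succ, hev.deriv_eq]
    have hterm : ∀ i : ℕ, HasDerivAt
        (fun g : ℂ => myCC x m i * Complex.exp (g * x) / (s+g)^(i+1))
        ((x:ℂ) * (myCC x m i * Complex.exp (γ * x) / (s+γ)^(i+1))
          - ((i:ℂ)+1) * (myCC x m i * Complex.exp (γ * x) / (s+γ)^(i+2))) γ := by
      intro i
      have h1 : HasDerivAt (fun g : ℂ => myCC x m i * Complex.exp (g * x))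
          (myCC x m i * ((x:ℂ) * Complex.exp (γ * x))) γ := by
        have he : HasDerivAt (fun g : ℂ => Complex.exp (g * x)) ((x:ℂ) * Complex.exp (γ * x)) γ := by
          have := (Complex.hasDerivAt_exp ((γ:ℂ) * x)).comp γ ((hasDerivAt_id γ).mul_const (x:ℂ))
          simpa [mul_comm, Function.comp_def] using this
        exact he.const_mul _
      have h2 : HasDerivAt (fun g : ℂ => (s+g)^(i+1)) (((i:ℂ)+1) * (s+γ)^i) γ := by
        have := ((hasDerivAt_pow (i+1) (s+γ)).comp γ ((hasDerivAt_id γ).const_add s))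
        simpa [Function.comp_def] using this
      have hne : (s+γ)^(i+1) ≠ 0 := pow_ne_zero _ hγ
      have := h1.fun_div h2 hne
      refine this.congr_deriv ?_
      have h3 : (s+γ)^(i+2) ≠ 0 := pow_ne_zero _ hγ
      field_simp
      ring
    have hsum := HasDerivAt.fun_sum (u := range (m+1)) (fun i _hi => hterm i)
    rw [hsum.deriv]
    -- now the combinatorial re-indexing
    rw [Finset.sum_sub_distrib]
    have hrhs : ∑ i ∈ range (m+1+1), myCC x (m+1) i * Complex.exp (γ * x) / (s+γ)^(i+1)
        = (∑ i ∈ range (m+1+1), (x:ℂ) * (myCC x m i * Complex.exp (γ * x) / (s+γ)^(i+1)))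
          - ∑ i ∈ range (m+1+1), (i:ℂ) * (myCC x m (i-1) * Complex.exp (γ * x) / (s+γ)^(i+1)) := by
      rw [← Finset.sum_sub_distrib]
      apply Finset.sum_congr rfl
      intro i hi
      rw [myCC_rec x m i (by simpa using Nat.lt_succ_iff.mp (Finset.mem_range.mp hi))]
      field_simp
    rw [hrhs]
    congr 1
    · -- first sums equal: drop last vanishing term
      have hz : myCC x m (m+1) = 0 := by
        unfold myCC
        rw [Nat.choose_succ_self]
        simp
      conv_rhs => rw [Finset.sum_range_succ]
      rw [hz]
      simp
    · -- second sums equal: drop first vanishing term and shift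
      conv_rhs => rw [Finset.sum_range_succ']
      simp only [Nat.cast_zero, zero_mul, add_zero, Nat.cast_add, Nat.cast_one,
        Nat.add_sub_cancel]

lemma my_geom (m : ℕ) (a b : ℂ) (ha : a ≠ 0) (hb : b ≠ 0) (hab : a ≠ b) :
    ∑ i ∈ range (m+1), 1/(a^(i+1) * b^(m-i+1)) = (1/a^(m+1) - 1/b^(m+1)) / (b - a) := by
  have hba : b - a ≠ 0 := sub_ne_zero.mpr (fun e => hab e.symm)
  rw [eq_div_iff hba]
  calc (∑ i ∈ range (m+1), 1/(a^(i+1) * b^(m-i+1))) * (b-a)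
      = (∑ i ∈ range (m+1), a⁻¹^i * b⁻¹^(m+1-1-i)) * (a⁻¹ - b⁻¹) := by
        rw [inv_sub_inv ha hb, Finset.sum_mul, Finset.sum_mul]
        apply Finset.sum_congr rfl
        intro i hi
        have him : i ≤ m := Nat.lt_succ_iff.mp (Finset.mem_range.mp hi)
        simp only [Nat.add_sub_cancel]
        rw [inv_pow, inv_pow, pow_succ, pow_succ]
        field_simp
    _ = a⁻¹^(m+1) - b⁻¹^(m+1) := geom_sum₂_mul _ _ _
    _ = 1/a^(m+1) - 1/b^(m+1) := by rw [inv_pow, inv_pow, one_div, one_div]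

lemma re_pos_ne_zero {z : ℂ} (h : 0 < z.re) : z ≠ 0 := by
  intro e; rw [e] at h; simp at h

lemma my_inner (s θ γ : ℂ) (hθ : 0 < θ.re) (hsre : 0 ≤ s.re) (hγ : 0 < γ.re)
    (hsθ : s ≠ θ) (m : ℕ) :
    IntegrableOn (fun x : ℝ => Complex.exp (θ*x) * (((-1)^m / (Nat.factorial m : ℂ)) *
      iteratedDeriv m (fun g : ℂ => Complex.exp (g*x)/(s+g)) γ)) (Set.Iio 0) ∧
    ∫ x in Set.Iio (0:ℝ), Complex.exp (θ*x) * (((-1)^m / (Nat.factorial m : ℂ)) *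
      iteratedDeriv m (fun g : ℂ => Complex.exp (g*x)/(s+g)) γ)
      = (1/(θ+γ)^(m+1) - 1/(s+γ)^(m+1)) / (s - θ) := by
  have hsγ : s + γ ≠ 0 := re_pos_ne_zero (by simp [Complex.add_re]; linarith)
  have hθγre : 0 < (θ+γ).re := by simp [Complex.add_re]; linarith
  have hθγ : θ + γ ≠ 0 := re_pos_ne_zero hθγre
  set E : ℕ → ℂ := fun i =>
    ((-1)^m / (Nat.factorial m : ℂ)) * ((m.choose i : ℂ) * (Nat.factorial i : ℂ) * (-1)^i)
      / (s+γ)^(i+1) with hE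
  have hfun : (fun x : ℝ => Complex.exp (θ*x) * (((-1)^m / (Nat.factorial m : ℂ)) *
      iteratedDeriv m (fun g : ℂ => Complex.exp (g*x)/(s+g)) γ))
      = fun x : ℝ => ∑ i ∈ range (m+1), E i * ((x:ℂ)^(m-i) * Complex.exp ((θ+γ)*x)) := by
    funext x
    rw [my_iterDeriv s x m γ hsγ, Finset.mul_sum, Finset.mul_sum]
    apply Finset.sum_congr rfl
    intro i _
    rw [hE]
    simp only [myCC]
    rw [show ((θ+γ) * (x:ℂ)) = θ*x + γ*x by ring, Complex.exp_add]
    field_simp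
  have hint : ∀ i, Integrable (fun x : ℝ => E i * ((x:ℂ)^(m-i) * Complex.exp ((θ+γ)*x)))
      (volume.restrict (Set.Iic (0:ℝ))) :=
    fun i => ((my_aux_integrable (m-i) (θ+γ) hθγre)).const_mul (E i)
  constructor
  · rw [hfun]
    apply integrable_finset_sum
    intro i _
    exact ((hint i).mono_measure (Measure.restrict_mono Set.Iio_subset_Iic_self le_rfl))
  · rw [hfun, setIntegral_congr_set Iio_ae_eq_Iic,
      integral_finset_sum _ (fun i _ => hint i)]
    have hterm : ∀ i ∈ range (m+1),
        (∫ x in Set.Iic (0:ℝ), E i * ((x:ℂ)^(m-i) * Complex.exp ((θ+γ)*x)))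
        = 1/((s+γ)^(i+1) * (θ+γ)^(m-i+1)) := by
      intro i hi
      have him : i ≤ m := Nat.lt_succ_iff.mp (Finset.mem_range.mp hi)
      rw [integral_const_mul, my_aux_integral (θ+γ) hθγre (m-i)]
      have h1 : (m.choose i : ℂ) * (Nat.factorial i : ℂ) * (Nat.factorial (m-i) : ℂ)
          = (Nat.factorial m : ℂ) := by
        push_cast [← Nat.choose_mul_factorial_mul_factorial him]
        ring
      have h2 : (-1:ℂ)^i * (-1)^(m-i) = (-1)^m := by
        rw [← pow_add]; congr 1; omega
      have hmf : (Nat.factorial m : ℂ) ≠ 0 := Nat.cast_ne_zero.mpr (Nat.factorial_ne_zero m)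
      have hp1 : (s+γ)^(i+1) ≠ 0 := pow_ne_zero _ hsγ
      have hp2 : (θ+γ)^(m-i+1) ≠ 0 := pow_ne_zero _ hθγ
      rw [hE]
      field_simp
      rw [show ((-1:ℂ)^m * (m.choose i:ℂ) * (Nat.factorial i:ℂ) * (-1)^i *
        (-1)^(m-i) * (Nat.factorial (m-i):ℂ))
        = ((-1)^m * ((-1)^i * (-1)^(m-i))) *
          ((m.choose i:ℂ) * (Nat.factorial i:ℂ) * (Nat.factorial (m-i):ℂ)) from by ring,
        h2, h1, ← mul_pow]
      norm_num
    rw [Finset.sum_congr rfl hterm, my_geom m (s+γ) (θ+γ) hsγ hθγ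
      (fun e => hsθ (by linear_combination e))]
    have hστ : s - θ ≠ 0 := sub_ne_zero.mpr hsθ
    have hτσ : θ - s ≠ 0 := sub_ne_zero.mpr (fun e => hsθ e.symm)
    rw [show (θ+γ) - (s+γ) = θ - s from by ring]
    field_simp
    ring

/-- Analytic core of formula (2.34) in Lemma 2.5: the Laplace transform in `x` over the
negative half-line of the undershoot-density expansion equals `(ψ⁻(θ)/ψ⁻(s) − 1)/(s − θ)`,
where `ψ⁻(s) = D₀ + ∑_{k,j} D_{kj}/(s+γ_k)^j`. -/
theorem paper_eq_2_34 (K : ℕ) (γ : Fin K → ℂ)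
    (hγinj : Function.Injective γ) (hγre : ∀ k, 0 < (γ k).re)
    (N : Fin K → ℕ) (hN : ∀ k, 1 ≤ N k)
    (D0 : ℂ) (D : Fin K → ℕ → ℂ) (ψm : ℂ → ℂ)
    (hψm : ∀ s : ℂ, 0 ≤ s.re →
      ψm s = D0 + ∑ k, ∑ j ∈ Finset.Icc 1 (N k), D k j / (s + γ k) ^ j)
    (θ s : ℂ) (hθ : 0 < θ.re) (hs : 0 ≤ s.re) (hsθ : s ≠ θ) (hψs : ψm s ≠ 0) :
    MeasureTheory.IntegrableOn
      (fun x : ℝ => Complex.exp (θ * x) * (1 / ψm s) *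
        ∑ k, ∑ j ∈ Finset.Icc 1 (N k),
          D k j * ((-1) ^ (j - 1) / (Nat.factorial (j - 1) : ℂ)) *
            iteratedDeriv (j - 1) (fun g : ℂ => Complex.exp (g * x) / (s + g)) (γ k))
      (Set.Iio 0) ∧
    ∫ x : ℝ in Set.Iio 0, Complex.exp (θ * x) * (1 / ψm s) *
        ∑ k, ∑ j ∈ Finset.Icc 1 (N k),
          D k j * ((-1) ^ (j - 1) / (Nat.factorial (j - 1) : ℂ)) *
            iteratedDeriv (j - 1) (fun g : ℂ => Complex.exp (g * x) / (s + g)) (γ k)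
      = (1 / (s - θ)) * (ψm θ / ψm s - 1) := by

  have hfun : (fun x : ℝ => Complex.exp (θ * x) * (1 / ψm s) *
        ∑ k, ∑ j ∈ Finset.Icc 1 (N k),
          D k j * ((-1) ^ (j - 1) / (Nat.factorial (j - 1) : ℂ)) *
            iteratedDeriv (j - 1) (fun g : ℂ => Complex.exp (g * x) / (s + g)) (γ k))
      = (fun x : ℝ => ∑ k, ∑ j ∈ Finset.Icc 1 (N k),
          ((1 / ψm s) * D k j) *
            (Complex.exp (θ*x) * (((-1)^(j-1) / (Nat.factorial (j-1) : ℂ)) *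
              iteratedDeriv (j-1) (fun g : ℂ => Complex.exp (g*x)/(s+g)) (γ k)))) := by
    funext x
    rw [Finset.mul_sum]
    apply Finset.sum_congr rfl
    intro k _
    rw [Finset.mul_sum]
    apply Finset.sum_congr rfl
    intro j _
    ring
  constructor
  · rw [hfun]
    apply MeasureTheory.integrable_finset_sum
    intro k _
    apply MeasureTheory.integrable_finset_sum
    intro j _
    exact ((my_inner s θ (γ k) hθ hs (hγre k) hsθ (j-1)).1).const_mul _
  · rw [hfun, MeasureTheory.integral_finset_sum _ (fun k _ =>
      MeasureTheory.integrable_finset_sum _ (fun j _ =>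
        ((my_inner s θ (γ k) hθ hs (hγre k) hsθ (j-1)).1).const_mul _))]
    have hstep : ∀ k : Fin K,
        (∫ x in Set.Iio (0:ℝ), ∑ j ∈ Finset.Icc 1 (N k),
          ((1 / ψm s) * D k j) *
            (Complex.exp (θ*x) * (((-1)^(j-1) / (Nat.factorial (j-1) : ℂ)) *
              iteratedDeriv (j-1) (fun g : ℂ => Complex.exp (g*x)/(s+g)) (γ k))))
        = ∑ j ∈ Finset.Icc 1 (N k), ((1 / ψm s) * D k j) *
            ((1/(θ+γ k)^j - 1/(s+γ k)^j) / (s - θ)) := by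
      intro k
      rw [MeasureTheory.integral_finset_sum _ (fun j _ =>
        ((my_inner s θ (γ k) hθ hs (hγre k) hsθ (j-1)).1).const_mul _)]
      apply Finset.sum_congr rfl
      intro j hj
      have hj1 : 1 ≤ j := (Finset.mem_Icc.mp hj).1
      have hjq : j - 1 + 1 = j := Nat.sub_add_cancel hj1
      rw [MeasureTheory.integral_const_mul,
        (my_inner s θ (γ k) hθ hs (hγre k) hsθ (j-1)).2, hjq]
    rw [Finset.sum_congr rfl (fun k _ => hstep k)]
    -- final algebra
    have hψθ := hψm θ hθ.le
    have hψs' := hψm s hs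
    have hστ : s - θ ≠ 0 := sub_ne_zero.mpr hsθ
    have hdiff : ψm θ - ψm s
        = ∑ k, ∑ j ∈ Finset.Icc 1 (N k), D k j * (1/(θ+γ k)^j - 1/(s+γ k)^j) := by
      rw [hψθ, hψs', add_sub_add_left_eq_sub, ← Finset.sum_sub_distrib]
      apply Finset.sum_congr rfl
      intro k _
      rw [← Finset.sum_sub_distrib]
      apply Finset.sum_congr rfl
      intro j _
      ring
    have hmain : ∑ k : Fin K, ∑ j ∈ Finset.Icc 1 (N k), ((1 / ψm s) * D k j) *
            ((1/(θ+γ k)^j - 1/(s+γ k)^j) / (s - θ))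
        = ((1 / ψm s) * (1/(s-θ))) * (ψm θ - ψm s) := by
      rw [hdiff, Finset.mul_sum]
      apply Finset.sum_congr rfl
      intro k _
      rw [Finset.mul_sum]
      apply Finset.sum_congr rfl
      intro j _
      ring
    rw [hmain]
    field_simp
end

section
/- Let θ, β, s ∈ ℂ with Re(θ + β) > 0 and s + β ≠ 0, and let j ∈ ℕ. Then the function x ↦ e^{−θx}·iteratedDeriv j (b ↦ e^{−bx}/(s+b)) (β) is integrable on (0,∞) and ∫_0^∞ e^{−θx}·iteratedDeriv j (b ↦ e^{−bx}/(s+b)) (β) dx = iteratedDeriv j (b ↦ 1/((θ+b)(s+b))) (β). -/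
open MeasureTheory Complex Finset Filter Set Topology

/-- General Leibniz-type formula for `iteratedDeriv` of a product, given derivative
families on an open set. -/
lemma leibniz_aux (U : Set ℂ) (hU : IsOpen U) (du dv : ℕ → ℂ → ℂ)
    (hu : ∀ n, ∀ z ∈ U, HasDerivAt (du n) (du (n + 1) z) z)
    (hv : ∀ n, ∀ z ∈ U, HasDerivAt (dv n) (dv (n + 1) z) z) :
    ∀ j, ∀ z ∈ U, iteratedDeriv j (fun w => du 0 w * dv 0 w) z
      = ∑ k ∈ Finset.range (j + 1), (j.choose k : ℂ) * (du k z * dv (j - k) z) := by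
  intro j
  induction j with
  | zero => intro z hz; simp
  | succ j ih =>
    intro z hz
    rw [iteratedDeriv_succ]
    have hev : (iteratedDeriv j fun w => du 0 w * dv 0 w) =ᶠ[nhds z]
        fun w => ∑ k ∈ Finset.range (j + 1), (j.choose k : ℂ) * (du k w * dv (j - k) w) := by
      filter_upwards [hU.mem_nhds hz] with w hw using ih w hw
    rw [hev.deriv_eq]
    have hder : HasDerivAt
        (fun w => ∑ k ∈ Finset.range (j + 1), (j.choose k : ℂ) * (du k w * dv (j - k) w))
        (∑ k ∈ Finset.range (j + 1), (j.choose k : ℂ) *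
          (du (k + 1) z * dv (j - k) z + du k z * dv (j - k + 1) z)) z := by
      apply HasDerivAt.fun_sum
      intro k _
      exact ((hu k z hz).mul (hv (j - k) z hz)).const_mul _
    rw [hder.deriv]
    rw [Finset.sum_choose_succ_mul (fun i m => du i z * dv m z) j]
    simp only [mul_add, Finset.sum_add_distrib]
    rw [add_comm]
    congr 1
    refine Finset.sum_congr rfl fun k hk => ?_
    rw [Nat.sub_add_comm (Nat.lt_succ_iff.mp (Finset.mem_range.mp hk))]

lemma hasDerivAt_exp_fam (x : ℝ) (n : ℕ) (z : ℂ) :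
    HasDerivAt (fun b : ℂ => (-(x : ℂ)) ^ n * Complex.exp (-b * x))
      ((-(x : ℂ)) ^ (n + 1) * Complex.exp (-z * x)) z := by
  have h : HasDerivAt (fun b : ℂ => -b * (x : ℂ)) (-(x : ℂ)) z := by
    simpa using ((hasDerivAt_id z).neg.mul_const (x : ℂ))
  have := (h.cexp.const_mul ((-(x : ℂ)) ^ n))
  refine this.congr_deriv ?_
  ring

lemma hasDerivAt_inv_fam (s : ℂ) (n : ℕ) (z : ℂ) (hz : s + z ≠ 0) :
    HasDerivAt (fun b : ℂ => (-1 : ℂ) ^ n * (n.factorial : ℂ) * ((s + b) ^ (n + 1))⁻¹)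
      ((-1 : ℂ) ^ (n + 1) * ((n + 1).factorial : ℂ) * ((s + z) ^ (n + 2))⁻¹) z := by
  have h : HasDerivAt (fun b : ℂ => (s + b) ^ (n + 1))
      ((n + 1 : ℂ) * (s + z) ^ n) z := by
    have := ((hasDerivAt_id z).const_add s).pow (n + 1)
    exact this.congr_deriv (by simp)
  have h2 := (h.inv (pow_ne_zero _ hz)).const_mul ((-1 : ℂ) ^ n * (n.factorial : ℂ))
  refine h2.congr_deriv ?_
  have hpow : ((s + z) ^ (n + 1)) ^ 2 = (s + z) ^ (n + 2) * (s + z) ^ n := by ring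
  rw [hpow]
  rw [Nat.factorial_succ]
  push_cast
  field_simp
  ring

lemma closed_form1 (x : ℝ) (s β : ℂ) (hsβ : s + β ≠ 0) (j : ℕ) :
    iteratedDeriv j (fun b : ℂ => Complex.exp (-b * x) / (s + b)) β
      = ∑ k ∈ Finset.range (j + 1), (j.choose k : ℂ) *
          (((-(x : ℂ)) ^ k * Complex.exp (-β * x)) *
            ((-1 : ℂ) ^ (j - k) * ((j - k).factorial : ℂ) * ((s + β) ^ (j - k + 1))⁻¹)) := by
  have hU : IsOpen {b : ℂ | s + b ≠ 0} :=
    isOpen_compl_singleton.preimage (continuous_const.add continuous_id)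
  have h := leibniz_aux {b : ℂ | s + b ≠ 0} hU
    (fun n b => (-(x : ℂ)) ^ n * Complex.exp (-b * x))
    (fun n b => (-1 : ℂ) ^ n * (n.factorial : ℂ) * ((s + b) ^ (n + 1))⁻¹)
    (fun n z _ => hasDerivAt_exp_fam x n z)
    (fun n z hz => hasDerivAt_inv_fam s n z hz) j β hsβ
  rw [← h]
  congr 1
  funext w
  simp [div_eq_mul_inv]

lemma closed_form2 (θ s β : ℂ) (hθβ : θ + β ≠ 0) (hsβ : s + β ≠ 0) (j : ℕ) :
    iteratedDeriv j (fun b : ℂ => 1 / ((θ + b) * (s + b))) β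
      = ∑ k ∈ Finset.range (j + 1), (j.choose k : ℂ) *
          (((-1 : ℂ) ^ k * (k.factorial : ℂ) * ((θ + β) ^ (k + 1))⁻¹) *
            ((-1 : ℂ) ^ (j - k) * ((j - k).factorial : ℂ) * ((s + β) ^ (j - k + 1))⁻¹)) := by
  have hU : IsOpen ({b : ℂ | θ + b ≠ 0} ∩ {b : ℂ | s + b ≠ 0}) :=
    (isOpen_compl_singleton.preimage (continuous_const.add continuous_id)).inter
      (isOpen_compl_singleton.preimage (continuous_const.add continuous_id))
  have h := leibniz_aux _ hU
    (fun n b => (-1 : ℂ) ^ n * (n.factorial : ℂ) * ((θ + b) ^ (n + 1))⁻¹)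
    (fun n b => (-1 : ℂ) ^ n * (n.factorial : ℂ) * ((s + b) ^ (n + 1))⁻¹)
    (fun n z hz => hasDerivAt_inv_fam θ n z hz.1)
    (fun n z hz => hasDerivAt_inv_fam s n z hz.2) j β ⟨hθβ, hsβ⟩
  rw [← h]
  congr 1
  funext w
  simp [div_eq_mul_inv, mul_inv, mul_comm]

lemma norm_aux (a : ℂ) (k : ℕ) {x : ℝ} (hx : 0 < x) :
    ‖(x : ℂ) ^ k * Complex.exp (-a * x)‖ = x ^ k * Real.exp (-a.re * x) := by
  rw [norm_mul, norm_pow, Complex.norm_exp,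
    Complex.norm_real, Real.norm_eq_abs, abs_of_pos hx]
  congr 2
  simp [Complex.mul_re]

lemma tendsto_aux (a : ℂ) (ha : 0 < a.re) (m : ℕ) :
    Tendsto (fun x : ℝ => (x : ℂ) ^ m * Complex.exp (-a * x)) atTop (𝓝 0) := by
  rw [tendsto_zero_iff_norm_tendsto_zero]
  have h := tendsto_rpow_mul_exp_neg_mul_atTop_nhds_zero (m : ℝ) a.re ha
  refine h.congr' ?_
  filter_upwards [eventually_gt_atTop (0 : ℝ)] with x hx
  rw [norm_aux a m hx, Real.rpow_natCast]

lemma real_integrable_aux (r : ℝ) (hr : 0 < r) (k : ℕ) :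
    IntegrableOn (fun x : ℝ => x ^ k * Real.exp (-r * x)) (Set.Ioi 0) := by
  apply integrable_of_isBigO_exp_neg (half_pos hr)
  · exact ((continuous_pow k).mul (Real.continuous_exp.comp
      (continuous_const.mul continuous_id))).continuousOn
  · have ht : Tendsto (fun x : ℝ =>
        (x ^ k * Real.exp (-r * x)) / Real.exp (-(r / 2) * x)) atTop (𝓝 0) := by
      have h := tendsto_rpow_mul_exp_neg_mul_atTop_nhds_zero (k : ℝ) (r / 2) (half_pos hr)
      refine h.congr' ?_
      filter_upwards [eventually_gt_atTop (0 : ℝ)] with x hx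
      rw [mul_div_assoc, ← Real.exp_sub, Real.rpow_natCast]
      ring_nf
    refine Asymptotics.IsLittleO.isBigO ?_
    rw [Asymptotics.isLittleO_iff_tendsto (fun x hx => absurd hx (Real.exp_ne_zero _))]
    exact ht

lemma integrable_aux (a : ℂ) (ha : 0 < a.re) (k : ℕ) :
    IntegrableOn (fun x : ℝ => (x : ℂ) ^ k * Complex.exp (-a * x)) (Set.Ioi 0) := by
  refine Integrable.mono' (real_integrable_aux a.re ha k)
    (Continuous.aestronglyMeasurable ?_) ?_
  · exact (continuous_ofReal.pow k).mul (Complex.continuous_exp.comp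
      ((continuous_const.mul continuous_ofReal)))
  · refine (ae_restrict_iff' measurableSet_Ioi).mpr (ae_of_all _ fun x hx => ?_)
    rw [norm_aux a k hx]

lemma integral_aux (a : ℂ) (ha : 0 < a.re) :
    ∀ k : ℕ, ∫ x : ℝ in Set.Ioi 0, (x : ℂ) ^ k * Complex.exp (-a * x)
      = (k.factorial : ℂ) / a ^ (k + 1) := by
  have ha0 : a ≠ 0 := fun h => by simp [h] at ha
  intro k
  induction k with
  | zero =>
    have hderiv : ∀ x ∈ Set.Ici (0 : ℝ), HasDerivAt
        (fun x : ℝ => Complex.exp (-a * x) * (-a⁻¹)) (Complex.exp (-a * x)) x := by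
      intro x _
      have hmul : HasDerivAt (fun z : ℂ => -a * z) (-a) (x : ℂ) := by
        simpa using (hasDerivAt_id (x : ℂ)).const_mul (-a)
      have h := (hmul.cexp.mul_const (-a⁻¹)).comp_ofReal
      convert h using 1
      field_simp
    have ht : Tendsto (fun x : ℝ => Complex.exp (-a * x) * (-a⁻¹)) atTop (𝓝 0) := by
      have := (tendsto_aux a ha 0).mul_const (-a⁻¹)
      simpa using this
    have key := integral_Ioi_of_hasDerivAt_of_tendsto' hderiv
      (by simpa using integrable_aux a ha 0) ht
    simp only [pow_zero, one_mul]
    rw [key]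
    simp [pow_one]
  | succ k ih =>
    set f' : ℝ → ℂ := fun x => (x : ℂ) ^ (k + 1) * Complex.exp (-a * x)
      - ((k + 1 : ℂ) * a⁻¹) * ((x : ℂ) ^ k * Complex.exp (-a * x)) with hf'
    have hderiv : ∀ x ∈ Set.Ici (0 : ℝ), HasDerivAt
        (fun x : ℝ => (x : ℂ) ^ (k + 1) * Complex.exp (-a * x) * (-a⁻¹)) (f' x) x := by
      intro x _
      have hmul : HasDerivAt (fun z : ℂ => -a * z) (-a) (x : ℂ) := by
        simpa using (hasDerivAt_id (x : ℂ)).const_mul (-a)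
      have hpow := hasDerivAt_pow (k + 1) (x : ℂ)
      have h := ((hpow.mul hmul.cexp).mul_const (-a⁻¹)).comp_ofReal
      refine h.congr_deriv ?_
      rw [hf']
      push_cast
      field_simp
      ring
    have hint : IntegrableOn f' (Set.Ioi 0) :=
      (integrable_aux a ha (k + 1)).sub ((integrable_aux a ha k).const_mul _)
    have ht : Tendsto (fun x : ℝ => (x : ℂ) ^ (k + 1) * Complex.exp (-a * x) * (-a⁻¹))
        atTop (𝓝 0) := by
      have := (tendsto_aux a ha (k + 1)).mul_const (-a⁻¹)
      simpa using this
    have key := integral_Ioi_of_hasDerivAt_of_tendsto' hderiv hint ht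
    have key0 : ∫ x : ℝ in Set.Ioi 0, f' x = 0 := by
      rw [key]
      simp
    have hsplit : ∫ x : ℝ in Set.Ioi 0, f' x
        = (∫ x : ℝ in Set.Ioi 0, (x : ℂ) ^ (k + 1) * Complex.exp (-a * x))
          - ((k + 1 : ℂ) * a⁻¹) * ∫ x : ℝ in Set.Ioi 0, (x : ℂ) ^ k * Complex.exp (-a * x) := by
      rw [hf', integral_sub (integrable_aux a ha (k + 1))
        ((integrable_aux a ha k).const_mul _), integral_const_mul]
    have h3 : (∫ x : ℝ in Set.Ioi 0, (x : ℂ) ^ (k + 1) * Complex.exp (-a * x))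
        = ((k + 1 : ℂ) * a⁻¹) * ((k.factorial : ℂ) / a ^ (k + 1)) := by
      have h4 := hsplit
      rw [key0, ih] at h4
      exact sub_eq_zero.mp h4.symm
    rw [h3, Nat.factorial_succ]
    push_cast
    rw [show a ^ (k + 1 + 1) = a ^ (k + 1) * a from pow_succ a (k + 1), eq_div_iff (mul_ne_zero (pow_ne_zero _ ha0) ha0), div_eq_mul_inv]
    have hc : a⁻¹ * a = 1 := inv_mul_cancel₀ ha0
    have hc2 : (a ^ (k + 1))⁻¹ * a ^ (k + 1) = 1 := inv_mul_cancel₀ (pow_ne_zero _ ha0)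
    calc (↑k + 1) * a⁻¹ * (↑k.factorial * (a ^ (k + 1))⁻¹) * (a ^ (k + 1) * a)
        = (↑k + 1) * ↑k.factorial * ((a ^ (k + 1))⁻¹ * a ^ (k + 1)) * (a⁻¹ * a) := by ring
      _ = (↑k + 1) * ↑k.factorial := by rw [hc, hc2]; ring

/-- Identity (2.35) of the paper: for `Re(θ + β) > 0` and `s + β ≠ 0`, the Laplace transform
over `(0, ∞)` of `x ↦ ∂_b^j (e^{-bx}/(s+b))|_{b = β}` against `e^{-θ x}` equals
`∂_b^j (1/((θ+b)(s+b)))|_{b = β}`. -/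
theorem paper_eq_2_35 (θ β s : ℂ) (hθβ : 0 < (θ + β).re) (hsβ : s + β ≠ 0) (j : ℕ) :
    MeasureTheory.IntegrableOn
      (fun x : ℝ => Complex.exp (-θ * x) *
        iteratedDeriv j (fun b : ℂ => Complex.exp (-b * x) / (s + b)) β) (Set.Ioi 0) ∧
    ∫ x : ℝ in Set.Ioi 0, Complex.exp (-θ * x) *
        iteratedDeriv j (fun b : ℂ => Complex.exp (-b * x) / (s + b)) β
      = iteratedDeriv j (fun b : ℂ => 1 / ((θ + b) * (s + b))) β := by
  have hθβ0 : θ + β ≠ 0 := fun h => by simp [h] at hθβ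
  have hfun : (fun x : ℝ => Complex.exp (-θ * x) *
      iteratedDeriv j (fun b : ℂ => Complex.exp (-b * x) / (s + b)) β)
      = fun x : ℝ => ∑ k ∈ Finset.range (j + 1),
          ((j.choose k : ℂ) * ((-1 : ℂ) ^ k) *
            ((-1 : ℂ) ^ (j - k) * ((j - k).factorial : ℂ) * ((s + β) ^ (j - k + 1))⁻¹)) *
          ((x : ℂ) ^ k * Complex.exp (-(θ + β) * x)) := by
    funext x
    rw [closed_form1 x s β hsβ j, Finset.mul_sum]
    refine Finset.sum_congr rfl fun k _ => ?_
    have hxe : Complex.exp (-(θ + β) * x) = Complex.exp (-θ * x) * Complex.exp (-β * x) := by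
      rw [← Complex.exp_add]; ring_nf
    rw [hxe, neg_pow]
    ring
  refine ⟨?_, ?_⟩
  · rw [hfun]
    exact integrable_finset_sum _ fun k _ => (integrable_aux (θ + β) hθβ k).const_mul _
  · rw [hfun, integral_finset_sum _ fun k _ => (integrable_aux (θ + β) hθβ k).const_mul _,
      closed_form2 θ s β hθβ0 hsβ j]
    refine Finset.sum_congr rfl fun k _ => ?_
    rw [integral_const_mul, integral_aux (θ + β) hθβ k, div_eq_mul_inv]
    ring
end

section
/- Let j ≥ 1 be a natural number, let x ≥ 0 be a real number, and let s, β ∈ ℂ with Re(s + β) > 0. Then the function y ↦ ((y+x)^{j−1}/(j−1)!)·e^{−sy−β(y+x)} is integrable on (0,∞) and ∫_0^∞ ((y+x)^{j−1}/(j−1)!)·e^{−sy−β(y+x)} dy = ((−1)^{j−1}/(j−1)!)·iteratedDeriv (j−1) (b ↦ e^{−bx}/(s+b)) (β). -/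
open MeasureTheory Complex
open Set Filter Metric Topology

-- aux real integrability
lemma aux_real (k : ℕ) (x : ℝ) {c : ℝ} (hc : 0 < c) :
    IntegrableOn (fun y : ℝ => (y + x) ^ k * Real.exp (-c * y)) (Ioi 0) := by
  apply integrable_of_isBigO_exp_neg (half_pos hc)
    (Continuous.continuousOn (by fun_prop))
  have key : Tendsto (fun y : ℝ => (y + x) ^ k * Real.exp (-(c / 2) * y)) atTop (𝓝 0) := by
    have h1 : Tendsto (fun y : ℝ => (c / 2) * (y + x)) atTop atTop :=
      (tendsto_atTop_add_const_right atTop x tendsto_id).const_mul_atTop (half_pos hc)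
    have h2 := ((Real.tendsto_pow_mul_exp_neg_atTop_nhds_zero k).comp h1).const_mul
      ((2 / c) ^ k * Real.exp ((c / 2) * x))
    rw [mul_zero] at h2
    refine h2.congr fun y => ?_
    have hcne : (c : ℝ) ≠ 0 := hc.ne'
    have : Real.exp (-(c / 2 * (y + x))) = Real.exp (-(c / 2) * y) * Real.exp (-(c / 2) * x) := by
      rw [← Real.exp_add]; ring_nf
    simp only [Function.comp, mul_pow, this]
    have e1 : (2 / c) ^ k * (c / 2) ^ k = 1 := by
      rw [← mul_pow]; field_simp; exact one_pow k
    have e2 : Real.exp (c / 2 * x) * Real.exp (-(c / 2) * x) = 1 := by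
      rw [← Real.exp_add]; ring_nf; exact Real.exp_zero
    calc (2 / c) ^ k * Real.exp (c / 2 * x) *
          ((c / 2) ^ k * (y + x) ^ k * (Real.exp (-(c / 2) * y) * Real.exp (-(c / 2) * x)))
        = ((2 / c) ^ k * (c / 2) ^ k) * (Real.exp (c / 2 * x) * Real.exp (-(c / 2) * x)) *
          ((y + x) ^ k * Real.exp (-(c / 2) * y)) := by ring
      _ = (y + x) ^ k * Real.exp (-(c / 2) * y) := by rw [e1, e2]; ring
  rw [Asymptotics.isBigO_iff]
  refine ⟨1, ?_⟩
  filter_upwards [key.eventually (eventually_le_nhds (by norm_num : (0:ℝ) < 1)),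
    eventually_ge_atTop (0 : ℝ), eventually_ge_atTop (-x)] with y h1 h2 h3
  have hyx : 0 ≤ y + x := by linarith
  have : |(y + x) ^ k * Real.exp (-c * y)| = ((y + x) ^ k * Real.exp (-(c/2) * y)) * Real.exp (-(c/2) * y) := by
    rw [_root_.abs_of_nonneg (by positivity), mul_assoc, ← Real.exp_add]; ring_nf
  rw [Real.norm_eq_abs, Real.norm_eq_abs, this]
  rw [_root_.abs_of_pos (Real.exp_pos _), one_mul]
  have hpos : 0 < Real.exp (-(c/2) * y) := Real.exp_pos _
  nlinarith [Real.exp_pos (-(c/2) * y), mul_nonneg (pow_nonneg hyx k) hpos.le]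

-- norm computation
lemma norm_integrand (s b : ℂ) (k : ℕ) {x y : ℝ} (hx : 0 ≤ x) (hy : 0 < y) :
    ‖((y + x : ℝ) : ℂ) ^ k * Complex.exp (-s * y - b * ((y : ℂ) + (x : ℂ)))‖
      = (y + x) ^ k * Real.exp (-(s + b).re * y - b.re * x) := by
  rw [norm_mul, norm_pow, Complex.norm_real, Real.norm_eq_abs,
    _root_.abs_of_nonneg (by linarith), Complex.norm_exp]
  congr 2
  simp [Complex.sub_re, Complex.neg_re, Complex.mul_re, Complex.add_re, Complex.ofReal_re,
    Complex.ofReal_im]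
  ring

lemma int_main (s : ℂ) (k : ℕ) {x : ℝ} (hx : 0 ≤ x) {b : ℂ} (hb : 0 < (s + b).re) :
    IntegrableOn (fun y : ℝ => ((y + x : ℝ) : ℂ) ^ k *
      Complex.exp (-s * y - b * ((y : ℂ) + (x : ℂ)))) (Ioi 0) := by
  have hg : IntegrableOn
      (fun y : ℝ => Real.exp (-(b.re * x)) * ((y + x) ^ k * Real.exp (-(s + b).re * y)))
      (Ioi 0) := (aux_real k x hb).const_mul _
  refine Integrable.mono' hg (Continuous.aestronglyMeasurable (by fun_prop)).restrict ?_
  rw [ae_restrict_iff' measurableSet_Ioi]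
  filter_upwards with y hy
  rw [norm_integrand s b k hx hy]
  rw [show -(s + b).re * y - b.re * x = (-(b.re * x)) + (-(s + b).re * y) by ring, Real.exp_add]
  ring_nf
  exact le_of_eq (by ring)

lemma exp_int {c : ℂ} (hc : 0 < c.re) :
    ∫ y : ℝ in Ioi (0:ℝ), Complex.exp (-(c * y)) = 1 / c := by
  have hc0 : c ≠ 0 := fun h => by simp [h] at hc
  have hderiv : ∀ y ∈ Ici (0:ℝ), HasDerivAt (fun y : ℝ => -Complex.exp (-(c * y)) / c)
      (Complex.exp (-(c * y))) y := by
    intro y _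
    have h1 : HasDerivAt (fun y : ℝ => -(c * (y : ℂ))) (-c) y := by
      convert ((hasDerivAt_id y).ofReal_comp.const_mul c).neg using 1
      · rfl
      · rfl
      · simp
    have h2 := h1.cexp
    have h3 := (h2.neg).div_const c
    convert h3 using 1
    · rfl
    · rfl
    field_simp
  have hint : IntegrableOn (fun y : ℝ => Complex.exp (-(c * y))) (Ioi 0) := by
    refine Integrable.mono' ((exp_neg_integrableOn_Ioi 0 hc : _))
      (Continuous.aestronglyMeasurable (by fun_prop)).restrict ?_
    filter_upwards with y
    rw [Complex.norm_exp]
    simp [Complex.mul_re]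
  have htend : Tendsto (fun y : ℝ => -Complex.exp (-(c * y)) / c) atTop (𝓝 0) := by
    rw [show (0 : ℂ) = -0 / c by simp]
    refine Tendsto.div_const (Tendsto.neg ?_) c
    rw [tendsto_zero_iff_norm_tendsto_zero]
    have : ∀ y : ℝ, ‖Complex.exp (-(c * y))‖ = Real.exp (-c.re * y) := by
      intro y
      rw [Complex.norm_exp]
      simp [Complex.mul_re]
    simp only [this]
    exact Real.tendsto_exp_atBot.comp (tendsto_id.const_mul_atTop_of_neg (by linarith))
  have := integral_Ioi_of_hasDerivAt_of_tendsto' hderiv hint htend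
  rw [this]
  simp [hc0]
  ring

lemma key_deriv (s : ℂ) {x : ℝ} (hx : 0 ≤ x) :
    ∀ k : ℕ, ∀ b : ℂ, 0 < (s + b).re →
      iteratedDeriv k (fun b : ℂ => Complex.exp (-b * x) / (s + b)) b
        = (-1) ^ k * ∫ y : ℝ in Ioi 0, ((y + x : ℝ) : ℂ) ^ k *
            Complex.exp (-s * y - b * ((y : ℂ) + (x : ℂ))) := by
  intro k
  induction k with
  | zero =>
    intro b hb
    rw [iteratedDeriv_zero, pow_zero, one_mul]
    have h1 : ∀ y : ℝ, ((y + x : ℝ) : ℂ) ^ 0 * Complex.exp (-s * y - b * ((y:ℂ)+(x:ℂ)))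
        = Complex.exp (-b * x) * Complex.exp (-((s+b) * y)) := by
      intro y; rw [pow_zero, one_mul, ← Complex.exp_add]; congr 1; push_cast; ring
    simp only [h1]
    rw [MeasureTheory.integral_const_mul, exp_int hb, mul_one_div]
  | succ k ih =>
    intro b hb
    have hU : IsOpen {w : ℂ | 0 < (s + w).re} :=
      isOpen_lt continuous_const (Complex.continuous_re.comp (continuous_const.add continuous_id))
    have hmem : {w : ℂ | 0 < (s + w).re} ∈ 𝓝 b := hU.mem_nhds hb
    have heq : iteratedDeriv k (fun b : ℂ => Complex.exp (-b * x) / (s + b)) =ᶠ[𝓝 b]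
        fun w => (-1) ^ k * ∫ y : ℝ in Ioi 0, ((y + x : ℝ) : ℂ) ^ k *
          Complex.exp (-s * y - w * ((y : ℂ) + (x : ℂ))) := by
      filter_upwards [hmem] with w hw using ih w hw
    rw [iteratedDeriv_succ, heq.deriv_eq]
    set ε : ℝ := (s + b).re / 2 with hεdef
    have hε : 0 < ε := half_pos hb
    set F : ℂ → ℝ → ℂ := fun w y => ((y + x : ℝ) : ℂ) ^ k *
      Complex.exp (-s * y - w * ((y : ℂ) + (x : ℂ))) with hF
    set F' : ℂ → ℝ → ℂ := fun w y => -(((y + x : ℝ) : ℂ) ^ (k+1) *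
      Complex.exp (-s * y - w * ((y : ℂ) + (x : ℂ)))) with hF'
    set bound : ℝ → ℝ := fun y =>
      Real.exp ((|b.re| + ε) * x) * ((y + x) ^ (k+1) * Real.exp (-ε * y)) with hbound
    have hder := hasDerivAt_integral_of_dominated_loc_of_deriv_le (F := F) (F' := F')
      (x₀ := b) (bound := bound) (μ := volume.restrict (Ioi 0)) (ball_mem_nhds b hε)
      (Eventually.of_forall fun w =>
        (Continuous.aestronglyMeasurable (by fun_prop)).restrict)
      (int_main s k hx hb)
      ((Continuous.aestronglyMeasurable (by fun_prop)).restrict)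
      (by
        rw [ae_restrict_iff' measurableSet_Ioi]
        filter_upwards with y hy
        intro w hw
        have hre : |(w - b).re| < ε := lt_of_le_of_lt (Complex.abs_re_le_norm _)
          (by rwa [← Complex.dist_eq, ← mem_ball])
        have hre1 : ε < (s + w).re := by
          have h1 : (s + w).re = (s + b).re + (w - b).re := by
            simp [Complex.add_re, Complex.sub_re]
          have := abs_lt.mp hre
          rw [h1, hεdef]; linarith [this.1]
        have hre2 : -w.re ≤ |b.re| + ε := by
          have := abs_lt.mp hre
          have h2 : (w - b).re = w.re - b.re := by simp [Complex.sub_re]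
          rw [h2] at this
          have := neg_abs_le b.re
          linarith [this]
        rw [hF', norm_neg, norm_integrand s w (k+1) hx hy, hbound]
        have h3 : -(s + w).re * y - w.re * x ≤ (|b.re| + ε) * x + (-ε * y) := by
          have e1 : -(s + w).re * y ≤ -ε * y :=
            mul_le_mul_of_nonneg_right (by linarith) hy.le
          have e2 : -w.re * x ≤ (|b.re| + ε) * x :=
            mul_le_mul_of_nonneg_right hre2 hx
          linarith
        calc (y + x) ^ (k+1) * Real.exp (-(s + w).re * y - w.re * x)
            ≤ (y + x) ^ (k+1) * Real.exp ((|b.re| + ε) * x + (-ε * y)) :=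
              mul_le_mul_of_nonneg_left (Real.exp_le_exp.mpr h3)
                (pow_nonneg (by linarith [(mem_Ioi.mp hy).le]) _)
          _ = Real.exp ((|b.re| + ε) * x) * ((y + x) ^ (k+1) * Real.exp (-ε * y)) := by
              rw [Real.exp_add]; ring)
      ((aux_real (k+1) x hε).const_mul _)
      (by
        refine Eventually.of_forall fun y => fun w _ => ?_
        have h1 : HasDerivAt (fun w : ℂ => -s * y - w * ((y:ℂ)+(x:ℂ))) (-((y:ℂ)+(x:ℂ))) w := by
          simpa [sub_eq_add_neg] using
            (((hasDerivAt_id w).mul_const ((y:ℂ)+(x:ℂ))).neg.const_add (-s * (y:ℂ)))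
        have h2 := (h1.cexp).const_mul (((y + x : ℝ) : ℂ) ^ k)
        convert h2 using 1
        show -(((y + x : ℝ) : ℂ) ^ (k+1) * Complex.exp (-s * y - w * ((y:ℂ)+(x:ℂ)))) = _
        push_cast [pow_succ]
        ring
        rfl)
    have hD : HasDerivAt (fun w : ℂ => (-1:ℂ) ^ k * ∫ y : ℝ in Ioi 0, F w y)
        ((-1:ℂ) ^ k * ∫ y : ℝ in Ioi 0, F' b y) b := hder.2.const_mul _
    rw [hD.deriv]
    rw [show (∫ y : ℝ in Ioi 0, F' b y) = -∫ y : ℝ in Ioi 0, ((y + x : ℝ) : ℂ) ^ (k+1) *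
      Complex.exp (-s * y - b * ((y : ℂ) + (x : ℂ))) from integral_neg _]
    rw [pow_succ]
    ring

/-- The integral identity in formula (2.26) of Lemma 2.4: for `j ≥ 1`, `x ≥ 0` and
`Re(s + β) > 0`,
`∫_0^∞ ((y+x)^{j-1}/(j-1)!) e^{-sy - β(y+x)} dy
  = ((-1)^{j-1}/(j-1)!) ∂_b^{j-1} (e^{-bx}/(s+b))|_{b = β}`. -/
theorem paper_eq_2_26_integral (j : ℕ) (hj : 1 ≤ j) (x : ℝ) (hx : 0 ≤ x) (s β : ℂ)
    (hsβ : 0 < (s + β).re) :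
    MeasureTheory.IntegrableOn
      (fun y : ℝ => (((y + x : ℝ) : ℂ) ^ (j - 1) / (Nat.factorial (j - 1) : ℂ)) *
        Complex.exp (-s * y - β * ((y : ℂ) + (x : ℂ)))) (Set.Ioi 0) ∧
    ∫ y : ℝ in Set.Ioi 0,
        (((y + x : ℝ) : ℂ) ^ (j - 1) / (Nat.factorial (j - 1) : ℂ)) *
          Complex.exp (-s * y - β * ((y : ℂ) + (x : ℂ)))
      = ((-1) ^ (j - 1) / (Nat.factorial (j - 1) : ℂ)) *
          iteratedDeriv (j - 1) (fun b : ℂ => Complex.exp (-b * x) / (s + b)) β := by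
  set k := j - 1 with hk
  have hfac : (Nat.factorial k : ℂ) ≠ 0 := Nat.cast_ne_zero.mpr (Nat.factorial_ne_zero k)
  have hI := int_main s k hx hsβ
  have heq : ∀ y : ℝ, (((y + x : ℝ) : ℂ) ^ k / (Nat.factorial k : ℂ)) *
      Complex.exp (-s * y - β * ((y : ℂ) + (x : ℂ)))
      = ((Nat.factorial k : ℂ))⁻¹ * (((y + x : ℝ) : ℂ) ^ k *
        Complex.exp (-s * y - β * ((y : ℂ) + (x : ℂ)))) := by
    intro y; field_simp
  constructor
  · have h2 : IntegrableOn (fun y : ℝ => ((Nat.factorial k : ℂ))⁻¹ *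
        (((y + x : ℝ) : ℂ) ^ k * Complex.exp (-s * y - β * ((y : ℂ) + (x : ℂ))))) (Ioi 0) :=
      hI.const_mul _
    exact h2.congr_fun (fun y _ => (heq y).symm) measurableSet_Ioi
  · simp only [heq]
    rw [MeasureTheory.integral_const_mul, key_deriv s hx k β hsβ]
    rw [show ((-1:ℂ)) ^ k / (Nat.factorial k : ℂ) * ((-1) ^ k *
        ∫ y : ℝ in Ioi 0, ((y + x : ℝ) : ℂ) ^ k *
          Complex.exp (-s * y - β * ((y : ℂ) + (x : ℂ))))
      = ((-1:ℂ) ^ k * (-1) ^ k) * ((Nat.factorial k : ℂ))⁻¹ *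
        ∫ y : ℝ in Ioi 0, ((y + x : ℝ) : ℂ) ^ k *
          Complex.exp (-s * y - β * ((y : ℂ) + (x : ℂ))) from by ring]
    rw [← mul_pow, neg_mul_neg, one_mul, one_pow, one_mul]
end

section
/- Let j ≥ 1 be a natural number, let x ≤ 0 be a real number, and let s, γ ∈ ℂ with Re(s + γ) > 0. Then the function y ↦ ((−y−x)^{j−1}/(j−1)!)·e^{sy+γ(y+x)} is integrable on (−∞,0) and ∫_{−∞}^0 ((−y−x)^{j−1}/(j−1)!)·e^{sy+γ(y+x)} dy = ((−1)^{j−1}/(j−1)!)·iteratedDeriv (j−1) (g ↦ e^{gx}/(s+g)) (γ). -/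
open MeasureTheory Complex Set Filter Topology
open MeasureTheory Complex

private lemma tendsto_aux1 (n : ℕ) {b : ℝ} (hb : 0 < b) :
    Tendsto (fun t : ℝ => t ^ n * Real.exp (-b * t)) atTop (𝓝 0) := by
  have h := ((Real.tendsto_pow_mul_exp_neg_atTop_nhds_zero n).comp
    (tendsto_id.const_mul_atTop hb)).const_mul ((b ^ n)⁻¹)
  rw [mul_zero] at h
  refine h.congr fun t => ?_
  have hbn : (b : ℝ) ^ n ≠ 0 := by positivity
  simp only [Function.comp, id, mul_pow, neg_mul]
  field_simp

private lemma tendsto_aux2 (n : ℕ) (c : ℝ) {b : ℝ} (hb : 0 < b) :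
    Tendsto (fun t : ℝ => (c + t) ^ n * Real.exp (-b * t)) atTop (𝓝 0) := by
  have h := ((tendsto_aux1 n hb).comp
    (tendsto_atTop_add_const_left atTop c tendsto_id)).const_mul (Real.exp (b * c))
  rw [mul_zero] at h
  refine h.congr fun t => ?_
  simp only [Function.comp, id]
  rw [mul_comm (Real.exp (b * c)), mul_assoc, ← Real.exp_add]
  ring_nf

private lemma integrableOn_aux1 (n : ℕ) (c : ℝ) {b : ℝ} (hb : 0 < b) :
    IntegrableOn (fun t : ℝ => (c + t) ^ n * Real.exp (-b * t)) (Ioi 0) := by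
  apply integrable_of_isBigO_exp_neg (half_pos hb)
    (((continuous_const.add continuous_id).pow n).mul
      (Real.continuous_exp.comp (continuous_const.mul continuous_id))).continuousOn
  have h : Tendsto (fun t : ℝ =>
      ((c + t) ^ n * Real.exp (-b * t)) / Real.exp (-(b/2) * t)) atTop (𝓝 0) := by
    refine (tendsto_aux2 n c (half_pos hb)).congr fun t => ?_
    rw [mul_div_assoc, ← Real.exp_sub]
    ring_nf
  exact (Asymptotics.isLittleO_of_tendsto'
    (by filter_upwards with t ht; exact absurd ht (Real.exp_ne_zero _)) h).isBigO

private lemma integrableOn_aux2 (n : ℕ) (c : ℝ) {b : ℝ} (hb : 0 < b) :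
    IntegrableOn (fun y : ℝ => (c - y) ^ n * Real.exp (b * y)) (Iio 0) := by
  have m : MeasurableEmbedding fun x : ℝ => -x := (Homeomorph.neg ℝ).measurableEmbedding
  have h0 : IntegrableOn (fun t : ℝ => (c + t) ^ n * Real.exp (-b * t)) (Ioi 0)
      ((volume : Measure ℝ).map (fun x : ℝ => -x)) := by
    rw [show (fun x : ℝ => -x) = Neg.neg from rfl, Measure.map_neg_eq_self]
    exact integrableOn_aux1 n c hb
  have h1 := (m.integrableOn_map_iff).mp h0
  have hs : (fun x : ℝ => -x) ⁻¹' (Ioi 0) = Iio 0 := by ext t; simp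
  rw [hs] at h1
  refine h1.congr_fun (fun t ht => ?_) measurableSet_Iio
  simp only [Function.comp]
  rw [show -b * -t = b * t by ring, show c + -t = c - t by ring]

private lemma integrable_aux_s8 (k : ℕ) (x : ℝ) (s g : ℂ) (h : 0 < (s + g).re) :
    IntegrableOn (fun y : ℝ => ((y : ℂ) + (x : ℂ)) ^ k *
      Complex.exp (s * y + g * ((y : ℂ) + (x : ℂ)))) (Iio 0) := by
  have hb := (integrableOn_aux2 k |x| h).mul_const (Real.exp (g.re * x))
  apply Integrable.mono' hb
  · apply Continuous.aestronglyMeasurable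
    fun_prop
  · filter_upwards [ae_restrict_mem measurableSet_Iio] with y hy
    have hre : (s * y + g * ((y : ℂ) + (x : ℂ))).re = (s + g).re * y + g.re * x := by
      have : ((y : ℂ) + (x : ℂ)) = ((y + x : ℝ) : ℂ) := by push_cast; ring
      rw [this]
      simp [Complex.add_re, Complex.mul_re, Complex.ofReal_re, Complex.ofReal_im]
      ring
    rw [norm_mul, norm_pow, Complex.norm_exp, hre]
    have hn : ‖(y : ℂ) + (x : ℂ)‖ = |y + x| := by
      rw [show ((y : ℂ) + (x : ℂ)) = ((y + x : ℝ) : ℂ) by push_cast; ring,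
        Complex.norm_real, Real.norm_eq_abs]
    rw [hn, Real.exp_add, ← mul_assoc]
    have h1 : |y + x| ^ k ≤ (|x| - y) ^ k := by
      apply pow_le_pow_left₀ (abs_nonneg _)
      calc |y + x| ≤ |y| + |x| := abs_add_le _ _
        _ = |x| - y := by rw [abs_of_nonpos (le_of_lt hy)]; ring
    exact mul_le_mul_of_nonneg_right
      (mul_le_mul_of_nonneg_right h1 (Real.exp_pos _).le) (Real.exp_pos _).le

private lemma integral_cexp_Iio {c : ℂ} (hc : 0 < c.re) :
    ∫ y : ℝ in Iio 0, Complex.exp (c * y) = 1 / c := by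
  have hc0 : c ≠ 0 := fun h => by simp [h] at hc
  rw [← integral_Iic_eq_integral_Iio]
  have hint : IntegrableOn (fun y : ℝ => Complex.exp (c * y)) (Iic (0:ℝ)) := by
    rw [integrableOn_Iic_iff_integrableOn_Iio]
    have := integrable_aux_s8 0 0 c 0 (by simpa using hc)
    simpa using this
  have hderiv : ∀ y ∈ Iic (0:ℝ), HasDerivAt (fun y : ℝ => Complex.exp (c * y) / c)
      (Complex.exp (c * y)) y := by
    intro y _
    have h1 : HasDerivAt (fun y : ℝ => c * (y : ℂ)) c y := by
      simpa using (Complex.ofRealCLM.hasDerivAt (x := y)).const_mul c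
    simpa [mul_comm, hc0] using (h1.cexp.div_const c)
  have htend : Tendsto (fun y : ℝ => Complex.exp (c * y) / c) atBot (𝓝 0) := by
    rw [tendsto_zero_iff_norm_tendsto_zero]
    have h1 : Tendsto (fun y : ℝ => Real.exp (c.re * y) / ‖c‖) atBot (𝓝 (0 / ‖c‖)) := by
      apply Tendsto.div_const
      exact Real.tendsto_exp_atBot.comp (Tendsto.const_mul_atBot hc tendsto_id)
    rw [zero_div] at h1
    refine h1.congr fun y => ?_
    rw [norm_div, Complex.norm_exp]
    congr 2
    simp [Complex.mul_re]
  have := integral_Iic_of_hasDerivAt_of_tendsto' hderiv hint htend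
  rw [this]
  simp [Complex.exp_zero]


private lemma hasDerivAt_aux (k : ℕ) (x : ℝ) (hx : x ≤ 0) (s : ℂ) {γ : ℂ}
    (hγ : 0 < (s + γ).re) :
    HasDerivAt (fun g : ℂ => ∫ y : ℝ in Iio 0, ((y : ℂ) + (x : ℂ)) ^ k *
        Complex.exp (s * y + g * ((y : ℂ) + (x : ℂ))))
      (∫ y : ℝ in Iio 0, ((y : ℂ) + (x : ℂ)) ^ (k + 1) *
        Complex.exp (s * y + γ * ((y : ℂ) + (x : ℂ)))) γ := by
  set ε := (s + γ).re / 2 with hε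
  have hεpos : 0 < ε := half_pos hγ
  have key := hasDerivAt_integral_of_dominated_loc_of_deriv_le (μ := volume.restrict (Iio 0))
    (F := fun (g : ℂ) (y : ℝ) => ((y : ℂ) + (x : ℂ)) ^ k *
        Complex.exp (s * y + g * ((y : ℂ) + (x : ℂ))))
    (F' := fun (g : ℂ) (y : ℝ) => ((y : ℂ) + (x : ℂ)) ^ (k + 1) *
        Complex.exp (s * y + g * ((y : ℂ) + (x : ℂ))))
    (x₀ := γ)
    (bound := fun y => (|x| - y) ^ (k + 1) * Real.exp (ε * y) * Real.exp ((γ.re - ε) * x))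
    (s := Metric.ball γ ε) (Metric.ball_mem_nhds γ hεpos) ?_ ?_ ?_ ?_ ?_ ?_
  · exact key.2
  · filter_upwards with g
    apply Continuous.aestronglyMeasurable
    fun_prop
  · exact integrable_aux_s8 k x s γ hγ
  · apply Continuous.aestronglyMeasurable
    fun_prop
  · filter_upwards [ae_restrict_mem measurableSet_Iio] with y hy g hg
    have hgre : γ.re - ε ≤ g.re := by
      have := Complex.abs_re_le_norm (g - γ)
      rw [Metric.mem_ball, Complex.dist_eq] at hg
      have h2 : |g.re - γ.re| < ε := by
        calc |g.re - γ.re| = |(g - γ).re| := by rw [Complex.sub_re]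
          _ ≤ ‖g - γ‖ := Complex.abs_re_le_norm _
          _ < ε := hg
      have := abs_lt.mp h2
      linarith [this.1]
    have hsg : ε ≤ (s + g).re := by
      have h2 : |g.re - γ.re| < ε := by
        rw [Metric.mem_ball, Complex.dist_eq] at hg
        calc |g.re - γ.re| = |(g - γ).re| := by rw [Complex.sub_re]
          _ ≤ ‖g - γ‖ := Complex.abs_re_le_norm _
          _ < ε := hg
      have := abs_lt.mp h2
      simp only [Complex.add_re] at hγ ⊢
      have : (s + γ).re / 2 = ε := rfl
      simp only [Complex.add_re] at this
      linarith [(abs_lt.mp h2).1]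
    have hre : (s * y + g * ((y : ℂ) + (x : ℂ))).re = (s + g).re * y + g.re * x := by
      rw [show ((y : ℂ) + (x : ℂ)) = ((y + x : ℝ) : ℂ) by push_cast; ring]
      simp [Complex.add_re, Complex.mul_re, Complex.ofReal_re, Complex.ofReal_im]
      ring
    rw [norm_mul, norm_pow, Complex.norm_exp, hre]
    have hn : ‖(y : ℂ) + (x : ℂ)‖ = |y + x| := by
      rw [show ((y : ℂ) + (x : ℂ)) = ((y + x : ℝ) : ℂ) by push_cast; ring,
        Complex.norm_real, Real.norm_eq_abs]
    rw [hn, Real.exp_add]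
    have h1 : |y + x| ^ (k+1) ≤ (|x| - y) ^ (k+1) := by
      apply pow_le_pow_left₀ (abs_nonneg _)
      calc |y + x| ≤ |y| + |x| := abs_add_le _ _
        _ = |x| - y := by rw [abs_of_nonpos (le_of_lt hy)]; ring
    have h2 : Real.exp ((s + g).re * y) ≤ Real.exp (ε * y) :=
      Real.exp_le_exp.mpr (mul_le_mul_of_nonpos_right hsg (le_of_lt hy))
    have h3 : Real.exp (g.re * x) ≤ Real.exp ((γ.re - ε) * x) :=
      Real.exp_le_exp.mpr (mul_le_mul_of_nonpos_right hgre hx)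
    calc |y + x| ^ (k+1) * (Real.exp ((s+g).re * y) * Real.exp (g.re * x))
        ≤ (|x| - y) ^ (k+1) * (Real.exp (ε * y) * Real.exp ((γ.re - ε) * x)) := by
          apply mul_le_mul h1 (mul_le_mul h2 h3 (Real.exp_pos _).le (Real.exp_pos _).le)
            (by positivity)
            (pow_nonneg (by have hy0 : y < 0 := hy; linarith [abs_nonneg x]) _)
      _ = (|x| - y) ^ (k+1) * Real.exp (ε * y) * Real.exp ((γ.re - ε) * x) := by ring
  · exact (integrableOn_aux2 (k+1) |x| hεpos).mul_const _
  · filter_upwards with y g hg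
    have h1 : HasDerivAt (fun g : ℂ => s * y + g * ((y : ℂ) + (x : ℂ)))
        ((y : ℂ) + (x : ℂ)) g := by
      simpa using ((hasDerivAt_id g).mul_const ((y : ℂ) + (x : ℂ))).const_add (s * y)
    have h2 := (h1.cexp).const_mul (((y : ℂ) + (x : ℂ)) ^ k)
    convert h2 using 1
    · rfl
    rw [pow_succ]
    ring

private lemma iteratedDeriv_eq_integral (k : ℕ) (x : ℝ) (hx : x ≤ 0) (s : ℂ) :
    ∀ γ : ℂ, 0 < (s + γ).re →
      iteratedDeriv k (fun g : ℂ => Complex.exp (g * x) / (s + g)) γ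
        = ∫ y : ℝ in Iio 0, ((y : ℂ) + (x : ℂ)) ^ k *
            Complex.exp (s * y + γ * ((y : ℂ) + (x : ℂ))) := by
  induction k with
  | zero =>
    intro γ hγ
    rw [iteratedDeriv_zero]
    have hrw : ∀ y : ℝ, ((y : ℂ) + (x : ℂ)) ^ 0 *
        Complex.exp (s * y + γ * ((y : ℂ) + (x : ℂ)))
        = Complex.exp ((s + γ) * y) * Complex.exp (γ * x) := by
      intro y
      rw [pow_zero, one_mul, ← Complex.exp_add]
      ring_nf
    rw [integral_congr_ae (Filter.Eventually.of_forall hrw)]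
    rw [integral_mul_const, integral_cexp_Iio hγ]
    field_simp
  | succ k ih =>
    intro γ hγ
    rw [iteratedDeriv_succ]
    have hopen : IsOpen {g : ℂ | 0 < (s + g).re} :=
      isOpen_lt continuous_const (Complex.continuous_re.comp (continuous_const.add continuous_id))
    have heq : (iteratedDeriv k (fun g : ℂ => Complex.exp (g * x) / (s + g)))
        =ᶠ[nhds γ] (fun g => ∫ y : ℝ in Iio 0, ((y : ℂ) + (x : ℂ)) ^ k *
            Complex.exp (s * y + g * ((y : ℂ) + (x : ℂ)))) := by
      filter_upwards [hopen.mem_nhds hγ] with g hg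
      exact ih g hg
    rw [heq.deriv_eq, (hasDerivAt_aux k x hx s hγ).deriv]

/-- The integral identity in formula (2.24) of Lemma 2.4 (negative half-line version):
for `j ≥ 1`, `x ≤ 0` and `Re(s + γ) > 0`,
`∫_{-∞}^0 ((-y-x)^{j-1}/(j-1)!) e^{sy + γ(y+x)} dy
  = ((-1)^{j-1}/(j-1)!) ∂_g^{j-1} (e^{gx}/(s+g))|_{g = γ}`. -/
theorem paper_eq_2_24_integral (j : ℕ) (hj : 1 ≤ j) (x : ℝ) (hx : x ≤ 0) (s γ : ℂ)
    (hsγ : 0 < (s + γ).re) :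
    MeasureTheory.IntegrableOn
      (fun y : ℝ => (((-y - x : ℝ) : ℂ) ^ (j - 1) / (Nat.factorial (j - 1) : ℂ)) *
        Complex.exp (s * y + γ * ((y : ℂ) + (x : ℂ)))) (Set.Iio 0) ∧
    ∫ y : ℝ in Set.Iio 0,
        (((-y - x : ℝ) : ℂ) ^ (j - 1) / (Nat.factorial (j - 1) : ℂ)) *
          Complex.exp (s * y + γ * ((y : ℂ) + (x : ℂ)))
      = ((-1) ^ (j - 1) / (Nat.factorial (j - 1) : ℂ)) *
          iteratedDeriv (j - 1) (fun g : ℂ => Complex.exp (g * x) / (s + g)) γ := by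
  set k := j - 1 with hk
  have hrw : ∀ y : ℝ, (((-y - x : ℝ) : ℂ) ^ k / (Nat.factorial k : ℂ)) *
      Complex.exp (s * y + γ * ((y : ℂ) + (x : ℂ)))
      = ((-1) ^ k / (Nat.factorial k : ℂ)) * (((y : ℂ) + (x : ℂ)) ^ k *
        Complex.exp (s * y + γ * ((y : ℂ) + (x : ℂ)))) := by
    intro y
    have : (((-y - x : ℝ) : ℂ)) = -(((y : ℂ) + (x : ℂ))) := by push_cast; ring
    rw [this, neg_pow]
    ring
  constructor
  · have := (integrable_aux_s8 k x s γ hsγ).const_mul ((-1) ^ k / (Nat.factorial k : ℂ))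
    exact this.congr (Filter.Eventually.of_forall fun y => (hrw y).symm)
  · rw [integral_congr_ae (Filter.Eventually.of_forall hrw), integral_const_mul,
      iteratedDeriv_eq_integral k x hx s γ hsγ]
end
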